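/- arXiv:2102.02693 — 3 statements merged into one kernel-verified Lean document; each statement's English description precedes it below -/
import Mathlib

section
/- Let R : [0,T]² → ℝ be continuous. Suppose ‖R‖_{ρ-var;[s,t]×[0,T]}^ρ ≤ C(t−s) for all 0 ≤ s ≤ t ≤ T and the symmetric bound in the second variable. Then for all rectangles [s₁,s₂]×[t₁,t₂] ⊆ [0,T]², one has ‖R‖_{ρ-var;[s₁,s₂]×[t₁,t₂]}^{2ρ} ≤ C²(s₂−s₁)(t₂−t₁). -/
open Finset Set
open scoped ENNReal

def IsPartitionOn (a b : ℝ) (n : ℕ) (τ : ℕ → ℝ) : Prop :=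
  Monotone τ ∧ τ 0 = a ∧ τ n = b

/-- Rectangular increment of `R` over `[s,t]×[u,v]`. -/
def rectIncr (R : ℝ → ℝ → ℝ) (s t u v : ℝ) : ℝ :=
  R t v - R t u - R s v + R s u

/-- The 2d `p`-variation of `R` on `[a,b]×[c,d]` (via grid partitions), in `ℝ≥0∞`. -/
noncomputable def pVar2d (p : ℝ) (R : ℝ → ℝ → ℝ) (a b c d : ℝ) : ℝ≥0∞ :=
  ⨆ (n : ℕ) (m : ℕ) (τ : ℕ → ℝ) (σ : ℕ → ℝ)
    (_ : IsPartitionOn a b n τ) (_ : IsPartitionOn c d m σ),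
    ENNReal.ofReal ((∑ i ∈ Finset.range n, ∑ j ∈ Finset.range m,
      |rectIncr R (τ i) (τ (i + 1)) (σ j) (σ (j + 1))| ^ p) ^ (1 / p))

lemma rectIncr_flip (R : ℝ → ℝ → ℝ) (s t u v : ℝ) :
    rectIncr (fun x y => R y x) s t u v = rectIncr R u v s t := by
  simp only [rectIncr]; ring

lemma pVar2d_flip_le (p : ℝ) (R : ℝ → ℝ → ℝ) (a b c d : ℝ) :
    pVar2d p (fun x y => R y x) a b c d ≤ pVar2d p R c d a b := by
  rw [pVar2d, pVar2d]
  refine iSup_le fun n => iSup_le fun m => iSup_le fun τ => iSup_le fun σ =>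
    iSup_le fun hτ => iSup_le fun hσ => ?_
  refine le_iSup_of_le m <| le_iSup_of_le n <| le_iSup_of_le σ <| le_iSup_of_le τ <|
    le_iSup_of_le hσ <| le_iSup_of_le hτ (le_of_eq ?_)
  congr 1
  rw [Finset.sum_comm]
  congr 1
  exact Finset.sum_congr rfl fun j _ => Finset.sum_congr rfl fun i _ => by
    rw [rectIncr_flip]

lemma pVar2d_flip (p : ℝ) (R : ℝ → ℝ → ℝ) (a b c d : ℝ) :
    pVar2d p (fun x y => R y x) a b c d = pVar2d p R c d a b := by
  refine le_antisymm (pVar2d_flip_le p R a b c d) ?_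
  simpa using pVar2d_flip_le p (fun x y => R y x) c d a b

/-- Bound on a single row: the `ρ`-sum over one column partition of `[t₁,t₂]`
over the strip `[a,b]` is controlled by `C (b - a)`. -/
lemma row_bound (T C ρ : ℝ) (hρ1 : 1 ≤ ρ) (hC : 0 ≤ C) (R : ℝ → ℝ → ℝ)
    (a b t₁ t₂ : ℝ) (hab : a ≤ b)
    (hbound : pVar2d ρ R a b 0 T ^ ρ ≤ ENNReal.ofReal (C * (b - a)))
    (ht₁ : 0 ≤ t₁) (ht₁₂ : t₁ ≤ t₂) (ht₂ : t₂ ≤ T)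
    (m : ℕ) (σ : ℕ → ℝ) (hσ : IsPartitionOn t₁ t₂ m σ) :
    ∑ j ∈ Finset.range m, |rectIncr R a b (σ j) (σ (j + 1))| ^ ρ ≤ C * (b - a) := by
  have hρ0 : (0:ℝ) < ρ := lt_of_lt_of_le one_pos hρ1
  obtain ⟨hσm, hσ0, hσn⟩ := hσ
  -- extended column partition of [0,T]
  set σ' : ℕ → ℝ := fun j => if j = 0 then 0 else if j ≤ m + 1 then σ (j - 1) else T with hσ'
  have hσle : ∀ j, j ≤ m → σ j ≤ T := fun j hj => le_trans (by rw [← hσn]; exact hσm hj) ht₂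
  have hσge : ∀ j, 0 ≤ σ j := fun j => le_trans ht₁ (by rw [← hσ0]; exact hσm (Nat.zero_le j))
  have hσ'mono : Monotone σ' := by
    apply monotone_nat_of_le_succ
    intro k
    simp only [hσ']
    split_ifs <;>
      first
        | exact False.elim (by assumption)
        | omega
        | exact hσge _
        | exact hσm (by omega)
        | exact hσle _ (by omega)
        | exact le_refl T
        | exact le_trans (hσge _) (hσle _ (by omega))
  have hσ'part : IsPartitionOn 0 T (m + 2) σ' := by
    refine ⟨hσ'mono, by simp [hσ'], ?_⟩
    simp only [hσ']
    rw [if_neg (by omega), if_neg (by omega)]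
  -- single-interval row partition of [a,b]
  set τ' : ℕ → ℝ := fun i => if i = 0 then a else b with hτ'
  have hτ'part : IsPartitionOn a b 1 τ' := by
    refine ⟨monotone_nat_of_le_succ fun k => ?_, by simp [hτ'], by simp [hτ']⟩
    simp only [hτ']
    split_ifs <;>
      first
        | exact False.elim (by assumption)
        | omega
        | exact hab
        | exact le_refl b
        | exact le_refl a
  set Sfull : ℝ := ∑ j ∈ Finset.range (m + 2), |rectIncr R a b (σ' j) (σ' (j + 1))| ^ ρ
    with hSfull
  have hSfull0 : 0 ≤ Sfull :=
    Finset.sum_nonneg fun j _ => Real.rpow_nonneg (abs_nonneg _) ρ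
  have hterm : ENNReal.ofReal (Sfull ^ (1 / ρ)) ≤ pVar2d ρ R a b 0 T := by
    rw [pVar2d]
    refine le_iSup_of_le 1 <| le_iSup_of_le (m + 2) <| le_iSup_of_le τ' <|
      le_iSup_of_le σ' <| le_iSup_of_le hτ'part <| le_iSup_of_le hσ'part (le_of_eq ?_)
    congr 1
    rw [Finset.sum_range_one]
    simp only [hτ']
    norm_num
    rfl
  have hfull : Sfull ≤ C * (b - a) := by
    have h1 : ENNReal.ofReal (Sfull ^ (1 / ρ)) ^ ρ ≤ ENNReal.ofReal (C * (b - a)) :=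
      le_trans (ENNReal.rpow_le_rpow hterm hρ0.le) hbound
    rw [ENNReal.ofReal_rpow_of_nonneg (Real.rpow_nonneg hSfull0 _) hρ0.le] at h1
    have heq : (Sfull ^ (1 / ρ)) ^ ρ = Sfull := by
      rw [← Real.rpow_mul hSfull0, one_div, inv_mul_cancel₀ hρ0.ne', Real.rpow_one]
    rw [heq] at h1
    exact (ENNReal.ofReal_le_ofReal_iff (mul_nonneg hC (by linarith))).mp h1
  -- our sum is a subsum of Sfull
  have hsub : ∑ j ∈ Finset.range m, |rectIncr R a b (σ j) (σ (j + 1))| ^ ρ ≤ Sfull := by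
    have heq : ∑ j ∈ Finset.range m, |rectIncr R a b (σ j) (σ (j + 1))| ^ ρ
        = ∑ j ∈ Finset.range m, |rectIncr R a b (σ' (j + 1)) (σ' (j + 2))| ^ ρ := by
      refine Finset.sum_congr rfl fun j hj => ?_
      have hjm : j < m := Finset.mem_range.mp hj
      simp only [hσ', if_neg (Nat.succ_ne_zero j), if_neg (Nat.succ_ne_zero (j+1))]
      rw [if_pos (by omega), if_pos (by omega)]
      norm_num
    rw [heq, hSfull, Finset.sum_range_succ' _ (m + 1)]
    have h2 : ∑ j ∈ Finset.range m, |rectIncr R a b (σ' (j + 1)) (σ' (j + 2))| ^ ρ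
        ≤ ∑ j ∈ Finset.range (m + 1), |rectIncr R a b (σ' (j + 1)) (σ' (j + 1 + 1))| ^ ρ := by
      refine Finset.sum_le_sum_of_subset_of_nonneg
        (Finset.range_subset_range.mpr (Nat.le_succ m)) fun j _ _ =>
        Real.rpow_nonneg (abs_nonneg _) ρ
    refine le_trans h2 (le_add_of_nonneg_right (Real.rpow_nonneg (abs_nonneg _) ρ))
  linarith

/-- If `‖R‖_{ρ-var;[s,t]×[0,T]}^ρ ≤ C(t−s)` and symmetrically in the second variable,
then `‖R‖_{ρ-var;[s₁,s₂]×[t₁,t₂]}^{2ρ} ≤ C²(s₂−s₁)(t₂−t₁)` on all subrectangles. -/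
theorem pVar2d_rect_bound
    (T C ρ : ℝ) (hρ1 : 1 ≤ ρ) (hρ2 : ρ < 2) (hC : 0 ≤ C)
    (R : ℝ → ℝ → ℝ)
    (hcont : ContinuousOn (fun z : ℝ × ℝ => R z.1 z.2) (Set.Icc 0 T ×ˢ Set.Icc 0 T))
    (hvar₁ : ∀ s t : ℝ, 0 ≤ s → s ≤ t → t ≤ T →
      pVar2d ρ R s t 0 T ^ ρ ≤ ENNReal.ofReal (C * (t - s)))
    (hvar₂ : ∀ u v : ℝ, 0 ≤ u → u ≤ v → v ≤ T →
      pVar2d ρ R 0 T u v ^ ρ ≤ ENNReal.ofReal (C * (v - u))) :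
    ∀ s₁ s₂ t₁ t₂ : ℝ, 0 ≤ s₁ → s₁ ≤ s₂ → s₂ ≤ T → 0 ≤ t₁ → t₁ ≤ t₂ → t₂ ≤ T →
      pVar2d ρ R s₁ s₂ t₁ t₂ ^ (2 * ρ) ≤
        ENNReal.ofReal (C ^ 2 * (s₂ - s₁) * (t₂ - t₁)) := by
  intro s₁ s₂ t₁ t₂ hs₁ hs₁₂ hs₂ ht₁ ht₁₂ ht₂
  have hρ0 : (0:ℝ) < ρ := lt_of_lt_of_le one_pos hρ1
  set M : ℝ := C ^ 2 * (s₂ - s₁) * (t₂ - t₁) with hM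
  have hM0 : 0 ≤ M := by
    apply mul_nonneg (mul_nonneg (sq_nonneg C) (by linarith)) (by linarith)
  -- key: pVar ≤ ofReal (M ^ (1/(2ρ)))
  have key : pVar2d ρ R s₁ s₂ t₁ t₂ ≤ ENNReal.ofReal (M ^ (1 / (2 * ρ))) := by
    rw [pVar2d]
    refine iSup_le fun n => iSup_le fun m => iSup_le fun τ => iSup_le fun σ =>
      iSup_le fun hτ => iSup_le fun hσ => ?_
    set S : ℝ := ∑ i ∈ Finset.range n, ∑ j ∈ Finset.range m,
      |rectIncr R (τ i) (τ (i + 1)) (σ j) (σ (j + 1))| ^ ρ with hS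
    have hS0 : 0 ≤ S := Finset.sum_nonneg fun i _ =>
      Finset.sum_nonneg fun j _ => Real.rpow_nonneg (abs_nonneg _) ρ
    -- row bound: S ≤ C (s₂ - s₁)
    have hrow : S ≤ C * (s₂ - s₁) := by
      have hstep : ∀ i ∈ Finset.range n,
          ∑ j ∈ Finset.range m, |rectIncr R (τ i) (τ (i + 1)) (σ j) (σ (j + 1))| ^ ρ
            ≤ C * (τ (i + 1) - τ i) := by
        intro i hi
        have hτi0 : 0 ≤ τ i := le_trans hs₁ (by rw [← hτ.2.1]; exact hτ.1 (Nat.zero_le i))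
        have hτmono : τ i ≤ τ (i + 1) := hτ.1 (Nat.le_succ i)
        have hτiT : τ (i + 1) ≤ T := le_trans
          (by rw [← hτ.2.2]; exact hτ.1 (Nat.succ_le_of_lt (Finset.mem_range.mp hi))) hs₂
        exact row_bound T C ρ hρ1 hC R (τ i) (τ (i + 1)) t₁ t₂ hτmono
          (hvar₁ (τ i) (τ (i + 1)) hτi0 hτmono hτiT) ht₁ ht₁₂ ht₂ m σ hσ
      calc S ≤ ∑ i ∈ Finset.range n, C * (τ (i + 1) - τ i) := Finset.sum_le_sum hstep
        _ = C * (τ n - τ 0) := by rw [← Finset.mul_sum, Finset.sum_range_sub]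
        _ = C * (s₂ - s₁) := by rw [hτ.2.1, hτ.2.2]
    -- column bound: S ≤ C (t₂ - t₁)
    have hcol : S ≤ C * (t₂ - t₁) := by
      have hswap : S = ∑ j ∈ Finset.range m, ∑ i ∈ Finset.range n,
          |rectIncr (fun x y => R y x) (σ j) (σ (j + 1)) (τ i) (τ (i + 1))| ^ ρ := by
        rw [hS, Finset.sum_comm]
        exact Finset.sum_congr rfl fun j _ => Finset.sum_congr rfl fun i _ => by
          rw [rectIncr_flip]
      have hstep : ∀ j ∈ Finset.range m,
          ∑ i ∈ Finset.range n,
            |rectIncr (fun x y => R y x) (σ j) (σ (j + 1)) (τ i) (τ (i + 1))| ^ ρ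
            ≤ C * (σ (j + 1) - σ j) := by
        intro j hj
        have hσj0 : 0 ≤ σ j := le_trans ht₁ (by rw [← hσ.2.1]; exact hσ.1 (Nat.zero_le j))
        have hσmono : σ j ≤ σ (j + 1) := hσ.1 (Nat.le_succ j)
        have hσjT : σ (j + 1) ≤ T := le_trans
          (by rw [← hσ.2.2]; exact hσ.1 (Nat.succ_le_of_lt (Finset.mem_range.mp hj))) ht₂
        have hbound : pVar2d ρ (fun x y => R y x) (σ j) (σ (j + 1)) 0 T ^ ρ
            ≤ ENNReal.ofReal (C * (σ (j + 1) - σ j)) := by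
          rw [pVar2d_flip]
          exact hvar₂ (σ j) (σ (j + 1)) hσj0 hσmono hσjT
        exact row_bound T C ρ hρ1 hC (fun x y => R y x) (σ j) (σ (j + 1)) s₁ s₂ hσmono
          hbound hs₁ hs₁₂ hs₂ n τ hτ
      calc S = _ := hswap
        _ ≤ ∑ j ∈ Finset.range m, C * (σ (j + 1) - σ j) := Finset.sum_le_sum hstep
        _ = C * (σ m - σ 0) := by rw [← Finset.mul_sum, Finset.sum_range_sub]
        _ = C * (t₂ - t₁) := by rw [hσ.2.1, hσ.2.2]
    -- S² ≤ M, hence S^(1/ρ) ≤ M^(1/(2ρ))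
    have hSM : S ^ 2 ≤ M := by
      rw [hM, sq, sq]
      calc S * S ≤ (C * (s₂ - s₁)) * (C * (t₂ - t₁)) :=
        mul_le_mul hrow hcol hS0 (mul_nonneg hC (by linarith))
        _ = C * C * (s₂ - s₁) * (t₂ - t₁) := by ring
    apply ENNReal.ofReal_le_ofReal
    have hkey : S ^ (1 / ρ) = (S ^ 2) ^ (1 / (2 * ρ)) := by
      rw [← Real.rpow_natCast S 2, ← Real.rpow_mul hS0]
      congr 1
      push_cast
      field_simp
    rw [hkey]
    exact Real.rpow_le_rpow (sq_nonneg S) hSM (by positivity)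
  -- conclude by raising to the power 2ρ
  have h2ρ : (0:ℝ) ≤ 2 * ρ := by linarith
  calc pVar2d ρ R s₁ s₂ t₁ t₂ ^ (2 * ρ)
      ≤ ENNReal.ofReal (M ^ (1 / (2 * ρ))) ^ (2 * ρ) := ENNReal.rpow_le_rpow key h2ρ
    _ = ENNReal.ofReal ((M ^ (1 / (2 * ρ))) ^ (2 * ρ)) :=
        ENNReal.ofReal_rpow_of_nonneg (Real.rpow_nonneg hM0 _) h2ρ
    _ = ENNReal.ofReal M := by
        rw [← Real.rpow_mul hM0, one_div, inv_mul_cancel₀ (by positivity), Real.rpow_one]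
end

section
/- Let ρ' > ρ ≥ 1 and let f : [0,T]² → ℝ be continuous. If the 2d ρ-variation ‖f‖_{ρ-var;[s₁,s₂]×[t₁,t₂]} (defined via grid partitions) is finite, then the controlled 2d ρ'-variation ⦀f⦀_{ρ'-var;[s₁,s₂]×[t₁,t₂]} (defined via arbitrary rectangular partitions of the rectangle) is finite, with C_{ρ,ρ'} ⦀f⦀_{ρ'-var} ≤ ‖f‖_{ρ-var} ≤ ⦀f⦀_{ρ-var}; in particular ‖f‖_{ρ'-var;[s,t]×[u,v]}^{ρ'} ≤ ω([s,t]×[u,v]) where ω([s,t]×[u,v]) := ⦀f⦀_{ρ'-var;[s,t]×[u,v]}^{ρ'} is a superadditive 2d control. -/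
open Finset Set
open scoped ENNReal

/-- A finite partition of `[a,b]×[c,d]` into essentially disjoint subrectangles. -/
def IsRectPartition (a b c d : ℝ) (k : ℕ) (r : ℕ → ℝ × ℝ × ℝ × ℝ) : Prop :=
  (∀ i < k, (r i).1 ≤ (r i).2.1 ∧ (r i).2.2.1 ≤ (r i).2.2.2) ∧
  (⋃ i ∈ Finset.range k,
      Set.Icc (r i).1 (r i).2.1 ×ˢ Set.Icc (r i).2.2.1 (r i).2.2.2)
    = Set.Icc a b ×ˢ Set.Icc c d ∧
  (∀ i < k, ∀ j < k, i ≠ j →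
    Disjoint (Set.Ioo (r i).1 (r i).2.1 ×ˢ Set.Ioo (r i).2.2.1 (r i).2.2.2)
      (Set.Ioo (r j).1 (r j).2.1 ×ˢ Set.Ioo (r j).2.2.1 (r j).2.2.2))

/-- Controlled 2d `p`-variation: supremum over arbitrary rectangular partitions. -/
noncomputable def cVar2d (p : ℝ) (f : ℝ → ℝ → ℝ) (a b c d : ℝ) : ℝ≥0∞ :=
  ⨆ (k : ℕ) (r : ℕ → ℝ × ℝ × ℝ × ℝ) (_ : IsRectPartition a b c d k r),
    ENNReal.ofReal ((∑ i ∈ Finset.range k,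
      |rectIncr f (r i).1 (r i).2.1 (r i).2.2.1 (r i).2.2.2| ^ p) ^ (1 / p))

namespace FVaux

def pieceLo (L : ℕ) (p : ℕ × ℕ) : ℕ := p.2 * 2 ^ (L - p.1)
def pieceHi (L : ℕ) (p : ℕ × ℕ) : ℕ := (p.2 + 1) * 2 ^ (L - p.1)

def contained (L l r s q : ℕ) : Prop := l ≤ q * 2 ^ (L - s) ∧ (q + 1) * 2 ^ (L - s) ≤ r

instance (L l r s q : ℕ) : Decidable (contained L l r s q) := by
  unfold contained; infer_instance

def dyad (L l r : ℕ) : Finset (ℕ × ℕ) :=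
  (range (L + 1) ×ˢ range (2 ^ L)).filter
    (fun p => contained L l r p.1 p.2 ∧ (p.1 = 0 ∨ ¬ contained L l r (p.1 - 1) (p.2 / 2)))

lemma mem_dyad {L l r : ℕ} {p : ℕ × ℕ} :
    p ∈ dyad L l r ↔ (p.1 < L + 1 ∧ p.2 < 2 ^ L) ∧ contained L l r p.1 p.2 ∧
      (p.1 = 0 ∨ ¬ contained L l r (p.1 - 1) (p.2 / 2)) := by
  simp [dyad, Finset.mem_filter, Finset.mem_product, and_assoc]

lemma mem_piece_iff {L s q m : ℕ} :
    m ∈ Finset.Ico (q * 2 ^ (L - s)) ((q + 1) * 2 ^ (L - s)) ↔ m / 2 ^ (L - s) = q := by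
  have hw : 0 < 2 ^ (L - s) := Nat.pow_pos (by norm_num)
  constructor
  · rintro hm
    rw [Finset.mem_Ico] at hm
    have h1 : q ≤ m / 2 ^ (L - s) := (Nat.le_div_iff_mul_le hw).2 hm.1
    have h2 : m / 2 ^ (L - s) < q + 1 := (Nat.div_lt_iff_lt_mul hw).2 hm.2
    omega
  · rintro rfl
    rw [Finset.mem_Ico]
    exact ⟨Nat.div_mul_le_self _ _, (Nat.div_lt_iff_lt_mul hw).1 (Nat.lt_succ_self _)⟩

/-- going up in the tree: containment of the canonical ancestor is monotone in level. -/
lemma contained_mono {L l r s s' m : ℕ} (hss : s ≤ s') (hsL : s' ≤ L)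
    (h : contained L l r s (m / 2 ^ (L - s))) :
    contained L l r s' (m / 2 ^ (L - s')) := by
  set w := 2 ^ (L - s) with hw
  set w' := 2 ^ (L - s') with hw'
  set t := 2 ^ (s' - s) with ht
  have htpos : 0 < t := Nat.pow_pos (by norm_num)
  have hwt : w = w' * t := by
    rw [hw, hw', ht, ← pow_add]
    congr 1
    omega
  have hq : m / w = (m / w') / t := by rw [hwt, Nat.div_div_eq_div_mul]
  obtain ⟨h1, h2⟩ := h
  constructor
  · calc l ≤ (m / w) * w := h1
      _ = ((m / w') / t * t) * w' := by rw [hq, hwt]; ring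
      _ ≤ (m / w') * w' := Nat.mul_le_mul_right _ (Nat.div_mul_le_self _ _)
  · have hlt : m / w' < (m / w + 1) * t := by
      rw [hq]
      exact (Nat.div_lt_iff_lt_mul htpos).1 (Nat.lt_succ_self _)
    calc (m / w' + 1) * w' ≤ ((m / w + 1) * t) * w' := Nat.mul_le_mul_right _ hlt
      _ = (m / w + 1) * w := by rw [hwt]; ring
      _ ≤ r := h2

lemma exists_unique_dyad {L l r m : ℕ} (hm : m ∈ Finset.Ico l r) (hr : r ≤ 2 ^ L) :
    ∃! p, p ∈ dyad L l r ∧ m ∈ Finset.Ico (pieceLo L p) (pieceHi L p) := by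
  rw [Finset.mem_Ico] at hm
  have hcontL : contained L l r L (m / 2 ^ (L - L)) := by
    simp only [Nat.sub_self, pow_zero, Nat.div_one, contained]
    omega
  have hex : ∃ s, contained L l r s (m / 2 ^ (L - s)) := ⟨L, hcontL⟩
  classical
  set s₀ := Nat.find hex with hs₀
  have hcont₀ : contained L l r s₀ (m / 2 ^ (L - s₀)) := Nat.find_spec hex
  have hs₀L : s₀ ≤ L := Nat.find_min' hex hcontL
  set q₀ := m / 2 ^ (L - s₀) with hq₀
  have hq₀lt : q₀ < 2 ^ L := by
    have h1 : q₀ ≤ m := Nat.div_le_self _ _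
    omega
  have hanc : ∀ s, 1 ≤ s → s ≤ L → m / 2 ^ (L - s) / 2 = m / 2 ^ (L - (s - 1)) := by
    intro s h1 hsL
    rw [Nat.div_div_eq_div_mul]
    congr 1
    rw [← pow_succ]
    congr 1
    omega
  refine ⟨(s₀, q₀), ⟨?_, ?_⟩, ?_⟩
  · rw [mem_dyad]
    refine ⟨⟨by omega, hq₀lt⟩, hcont₀, ?_⟩
    rcases Nat.eq_zero_or_pos s₀ with h0 | h0
    · exact Or.inl h0
    · refine Or.inr ?_
      have := hanc s₀ (by omega) hs₀L
      simp only [hq₀]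
      rw [this]
      exact Nat.find_min hex (by omega)
  · rw [pieceLo, pieceHi]
    exact mem_piece_iff.2 rfl
  · rintro ⟨s, q⟩ ⟨hpd, hpm⟩
    rw [mem_dyad] at hpd
    obtain ⟨⟨hsL', _⟩, hcont, halt⟩ := hpd
    have hq : m / 2 ^ (L - s) = q := by
      rw [pieceLo, pieceHi] at hpm
      exact mem_piece_iff.1 hpm
    subst hq
    have hles : s₀ ≤ s := Nat.find_min' hex hcont
    have hs : s = s₀ := by
      by_contra hne
      have h1 : 1 ≤ s := by omega
      have h2 : s₀ ≤ s - 1 := by omega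
      have hc : contained L l r (s - 1) (m / 2 ^ (L - (s - 1))) :=
        contained_mono h2 (by omega) hcont₀
      rcases halt with h0 | hh
      · omega
      · rw [hanc s (by omega) (by omega)] at hh
        exact hh hc
    subst hs
    rfl

lemma dyad_piece_subset {L l r : ℕ} {p : ℕ × ℕ} (hp : p ∈ dyad L l r) :
    Finset.Ico (pieceLo L p) (pieceHi L p) ⊆ Finset.Ico l r := by
  rw [mem_dyad] at hp
  obtain ⟨_, ⟨h1, h2⟩, _⟩ := hp
  intro m hm
  rw [Finset.mem_Ico] at *
  rw [pieceLo, pieceHi] at hm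
  omega

lemma dyad_biUnion {L l r : ℕ} (hr : r ≤ 2 ^ L) :
    (dyad L l r).biUnion (fun p => Finset.Ico (pieceLo L p) (pieceHi L p)) = Finset.Ico l r := by
  ext m
  rw [Finset.mem_biUnion]
  constructor
  · rintro ⟨p, hp, hm⟩
    exact dyad_piece_subset hp hm
  · intro hm
    obtain ⟨p, ⟨hp1, hp2⟩, _⟩ := exists_unique_dyad hm hr
    exact ⟨p, hp1, hp2⟩

lemma dyad_pairwiseDisjoint {L l r : ℕ} (hr : r ≤ 2 ^ L) :
    (↑(dyad L l r) : Set (ℕ × ℕ)).PairwiseDisjoint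
      (fun p => Finset.Ico (pieceLo L p) (pieceHi L p)) := by
  intro p hp p' hp' hne
  simp only [Finset.coe_mem, Finset.mem_coe] at hp hp'
  simp only [Function.onFun]
  rw [Finset.disjoint_left]
  intro m hm hm'
  have hmem : m ∈ Finset.Ico l r := dyad_piece_subset hp hm
  obtain ⟨p₀, _, huniq⟩ := exists_unique_dyad hmem hr
  exact hne ((huniq p ⟨hp, hm⟩).trans (huniq p' ⟨hp', hm'⟩).symm)

lemma sum_telescope_Ico (F : ℕ → ℝ) {l r : ℕ} (h : l ≤ r) :
    ∑ m ∈ Finset.Ico l r, (F (m + 1) - F m) = F r - F l := by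
  induction r, h using Nat.le_induction with
  | base => simp
  | succ n hn ih =>
      rw [Finset.sum_Ico_succ_top (by omega), ih]
      ring

lemma sum_dyad (F : ℕ → ℝ) {L l r : ℕ} (hlr : l ≤ r) (hr : r ≤ 2 ^ L) :
    ∑ p ∈ dyad L l r, (F (pieceHi L p) - F (pieceLo L p)) = F r - F l := by
  have hterm : ∀ p ∈ dyad L l r,
      F (pieceHi L p) - F (pieceLo L p)
        = ∑ m ∈ Finset.Ico (pieceLo L p) (pieceHi L p), (F (m + 1) - F m) := by
    intro p _
    rw [sum_telescope_Ico]
    exact Nat.mul_le_mul_right _ (by omega)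
  rw [Finset.sum_congr rfl hterm, ← Finset.sum_biUnion (dyad_pairwiseDisjoint hr),
    dyad_biUnion hr, sum_telescope_Ico F hlr]

lemma dyad_level_card {L l r : ℕ} (hr : r ≤ 2 ^ L) (s : ℕ) :
    ((dyad L l r).filter (fun p => p.1 = s)).card ≤ 2 := by
  classical
  rcases Nat.eq_zero_or_pos s with h0 | hs
  · subst h0
    have hsub : (dyad L l r).filter (fun p => p.1 = 0) ⊆ {(0, 0)} := by
      intro p hp
      rw [Finset.mem_filter] at hp
      obtain ⟨hpd, hp1⟩ := hp
      rw [mem_dyad] at hpd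
      obtain ⟨_, ⟨_, h2⟩, _⟩ := hpd
      rw [hp1] at h2
      have hq0 : p.2 = 0 := by
        by_contra hq
        have : 2 * 2 ^ (L - 0) ≤ (p.2 + 1) * 2 ^ (L - 0) :=
          Nat.mul_le_mul_right _ (by omega)
        have h2L : 0 < 2 ^ L := Nat.pow_pos (by norm_num)
        simp only [Nat.sub_zero] at *
        omega
      rw [Finset.mem_singleton, Prod.ext_iff]
      exact ⟨hp1, hq0⟩
    calc _ ≤ ({(0,0)} : Finset (ℕ × ℕ)).card := Finset.card_le_card hsub
      _ ≤ 2 := by simp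
  · set w := 2 ^ (L - s) with hw
    set W := 2 ^ (L - (s - 1)) with hW
    have hwpos : 0 < w := Nat.pow_pos (by norm_num)
    have hWpos : 0 < W := Nat.pow_pos (by norm_num)
    -- basic facts about members of the level-s filter
    have hfacts : ∀ p ∈ (dyad L l r).filter (fun p => p.1 = s),
        l ≤ p.2 * w ∧ (p.2 + 1) * w ≤ r ∧ ¬ contained L l r (s - 1) (p.2 / 2) ∧ s ≤ L := by
      intro p hp
      rw [Finset.mem_filter] at hp
      obtain ⟨hpd, hp1⟩ := hp
      rw [mem_dyad] at hpd
      obtain ⟨⟨hsl, _⟩, ⟨h1, h2⟩, halt⟩ := hpd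
      rw [hp1] at h1 h2 halt hsl
      refine ⟨h1, h2, ?_, by omega⟩
      rcases halt with h | h
      · omega
      · exact h
    have hW2 : ∀ p ∈ (dyad L l r).filter (fun p => p.1 = s), W = 2 * w := by
      intro p hp
      obtain ⟨_, _, _, hsL⟩ := hfacts p hp
      rw [hW, hw, ← pow_succ']
      congr 1
      omega
    refine le_trans (Finset.card_le_card_of_injOn (fun p => p.2 / 2)
      (t := {(l - 1) / W, (r - 1) / W}) ?_ ?_) ?_
    · intro p hp
      obtain ⟨h1, h2, hnc, hsL⟩ := hfacts p hp
      have hw2 : W = 2 * w := hW2 p hp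
      rw [contained, not_and_or, not_le, not_le] at hnc
      rw [← hW] at hnc
      set q := p.2
      have hql : q / 2 * W ≤ q * w := by
        calc q / 2 * W = q / 2 * 2 * w := by rw [hw2]; ring
          _ ≤ q * w := Nat.mul_le_mul_right _ (by omega)
      have hqr : q * w < (q / 2 + 1) * W := by
        have hlt : q < (q / 2 + 1) * 2 := by omega
        calc q * w < ((q / 2 + 1) * 2) * w := (Nat.mul_lt_mul_right hwpos).2 hlt
          _ = (q / 2 + 1) * W := by rw [hw2]; ring
      simp only [Finset.mem_coe, Finset.mem_insert, Finset.mem_singleton]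
      rcases hnc with hcase | hcase
      · left
        have hl1 : 1 ≤ l := by omega
        symm
        have hlow : q / 2 * W ≤ l - 1 := by omega
        have hhigh : l - 1 < (q / 2 + 1) * W := by
          have : l ≤ q * w := h1
          omega
        have h1' : q / 2 ≤ (l-1) / W := (Nat.le_div_iff_mul_le hWpos).2 hlow
        have h2' : (l-1) / W < q / 2 + 1 := (Nat.div_lt_iff_lt_mul hWpos).2 hhigh
        omega
      · right
        symm
        have hr1 : 1 ≤ r := by
          have : 0 < (q+1) * w := Nat.mul_pos (by omega) hwpos
          omega
        have hlow : q / 2 * W ≤ r - 1 := by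
          have hb : q * w + w ≤ r := by
            have : (q + 1) * w = q * w + w := by ring
            omega
          omega
        have hhigh : r - 1 < (q / 2 + 1) * W := by omega
        have h1' : q / 2 ≤ (r-1) / W := (Nat.le_div_iff_mul_le hWpos).2 hlow
        have h2' : (r-1) / W < q / 2 + 1 := (Nat.div_lt_iff_lt_mul hWpos).2 hhigh
        omega
    · intro p hp p' hp' heq
      simp only [Finset.mem_coe] at hp hp'
      obtain ⟨h1, h2, hnc, hsL⟩ := hfacts p hp
      obtain ⟨h1', h2', hnc', _⟩ := hfacts p' hp'
      have hw2 : W = 2 * w := hW2 p hp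
      have hps : p.1 = s := (Finset.mem_filter.1 hp).2
      have hps' : p'.1 = s := (Finset.mem_filter.1 hp').2
      by_contra hne
      have hneq : p.2 ≠ p'.2 := by
        intro h
        apply hne
        exact Prod.ext (hps.trans hps'.symm) h
      simp only at heq
      set q := p.2 with hq
      set q' := p'.2 with hq'
      set c := q / 2 with hc
      have hcq' : q' / 2 = c := by omega
      -- one of q, q' is 2c, the other 2c+1
      have hcases : (q = 2*c ∧ q' = 2*c+1) ∨ (q = 2*c+1 ∧ q' = 2*c) := by omega
      have hcont : contained L l r (s - 1) c := by
        constructor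
        · show l ≤ c * 2 ^ (L - (s-1))
          rw [← hW, hw2]
          rcases hcases with ⟨ha, hb⟩ | ⟨ha, hb⟩
          · calc l ≤ q * w := h1
              _ = c * (2 * w) := by rw [ha]; ring
          · calc l ≤ q' * w := h1'
              _ = c * (2 * w) := by rw [hb]; ring
        · show (c + 1) * 2 ^ (L - (s-1)) ≤ r
          rw [← hW, hw2]
          rcases hcases with ⟨ha, hb⟩ | ⟨ha, hb⟩
          · calc (c+1) * (2*w) = (q' + 1) * w := by rw [hb]; ring
              _ ≤ r := h2'
          · calc (c+1) * (2*w) = (q + 1) * w := by rw [ha]; ring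
              _ ≤ r := h2
      exact hnc hcont
    · apply le_trans (Finset.card_insert_le _ _)
      simp


noncomputable def enum (b : ℝ) (T : Finset ℝ) (j : ℕ) : ℝ :=
  if h : j < T.card then (T.orderIsoOfFin rfl ⟨j, h⟩ : ℝ) else b

lemma enum_mem {b : ℝ} {T : Finset ℝ} {j : ℕ} (hj : j < T.card) : enum b T j ∈ T := by
  rw [enum, dif_pos hj]
  exact (T.orderIsoOfFin rfl ⟨j, hj⟩).2

lemma enum_mono {b : ℝ} {T : Finset ℝ} (hT : ∀ x ∈ T, x ≤ b) : Monotone (enum b T) := by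
  intro j j' hj
  by_cases h : j < T.card
  · by_cases h' : j' < T.card
    · rw [enum, dif_pos h, enum, dif_pos h']
      exact (T.orderIsoOfFin rfl).monotone (by exact hj)
    · rw [enum, dif_pos h, enum, dif_neg h']
      exact hT _ (T.orderIsoOfFin rfl ⟨j, h⟩).2
  · have h' : ¬ j' < T.card := by omega
    rw [enum, dif_neg h, enum, dif_neg h']

lemma enum_large {b : ℝ} {T : Finset ℝ} {j : ℕ} (hj : T.card ≤ j) : enum b T j = b := by
  rw [enum, dif_neg (by omega)]

lemma enum_surj {b c : ℝ} {T : Finset ℝ} (hc : c ∈ T) : ∃ j, j < T.card ∧ enum b T j = c := by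
  obtain ⟨i, hi⟩ := (T.orderIsoOfFin rfl).surjective ⟨c, hc⟩
  exact ⟨i.1, i.2, by rw [enum, dif_pos i.2]; simp [hi]⟩

lemma enum_zero {a b : ℝ} {T : Finset ℝ} (ha : a ∈ T) (hT : ∀ x ∈ T, a ≤ x) :
    enum b T 0 = a := by
  have hcard : 0 < T.card := Finset.card_pos.2 ⟨a, ha⟩
  obtain ⟨j, hj, hje⟩ := enum_surj (b := b) ha
  have h1 : enum b T 0 ≤ a := by
    rw [← hje, enum, dif_pos hcard, enum, dif_pos hj]
    exact (T.orderIsoOfFin rfl).monotone (by exact Fin.mk_le_mk.2 (Nat.zero_le j))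
  exact le_antisymm h1 (hT _ (enum_mem hcard))


lemma rpow_rpow_inv {x : ℝ≥0∞} {p : ℝ} (hp : p ≠ 0) : (x ^ p) ^ (1 / p) = x := by
  rw [← ENNReal.rpow_mul, mul_one_div_cancel hp, ENNReal.rpow_one]

lemma ofReal_rpow_one_div {S p : ℝ} (hS : 0 ≤ S) (hp : 0 < p) :
    ENNReal.ofReal (S ^ (1 / p)) ^ p = ENNReal.ofReal S := by
  rw [ENNReal.ofReal_rpow_of_nonneg (Real.rpow_nonneg hS _) hp.le, one_div,
    Real.rpow_inv_rpow hS hp.ne']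

lemma iSup_rpow {ι : Sort*} (u : ι → ℝ≥0∞) {p : ℝ} (hp : 0 < p) :
    (⨆ i, u i) ^ p = ⨆ i, u i ^ p := by
  have h := OrderIso.map_iSup (ENNReal.orderIsoRpow p hp) u
  simp only [ENNReal.orderIsoRpow_apply] at h
  exact h

/-- abbreviation for the double grid sum -/
noncomputable def gridSum (p : ℝ) (f : ℝ → ℝ → ℝ) (n m : ℕ) (τ σ : ℕ → ℝ) : ℝ :=
  ∑ i ∈ Finset.range n, ∑ j ∈ Finset.range m,
    |rectIncr f (τ i) (τ (i + 1)) (σ j) (σ (j + 1))| ^ p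

lemma gridSum_nonneg (p : ℝ) (f : ℝ → ℝ → ℝ) (n m : ℕ) (τ σ : ℕ → ℝ) :
    0 ≤ gridSum p f n m τ σ := by
  apply Finset.sum_nonneg
  intro i _
  apply Finset.sum_nonneg
  intro j _
  exact Real.rpow_nonneg (abs_nonneg _) _

/-- abbreviation for the rectangle-partition sum -/
noncomputable def rectSum (p : ℝ) (f : ℝ → ℝ → ℝ) (k : ℕ) (r : ℕ → ℝ × ℝ × ℝ × ℝ) : ℝ :=
  ∑ i ∈ Finset.range k, |rectIncr f (r i).1 (r i).2.1 (r i).2.2.1 (r i).2.2.2| ^ p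

lemma rectSum_nonneg (p : ℝ) (f : ℝ → ℝ → ℝ) (k : ℕ) (r : ℕ → ℝ × ℝ × ℝ × ℝ) :
    0 ≤ rectSum p f k r :=
  Finset.sum_nonneg fun i _ => Real.rpow_nonneg (abs_nonneg _) _

lemma pVar2d_def (p : ℝ) (f : ℝ → ℝ → ℝ) (a b c d : ℝ) :
    pVar2d p f a b c d = ⨆ (n : ℕ) (m : ℕ) (τ : ℕ → ℝ) (σ : ℕ → ℝ)
      (_ : IsPartitionOn a b n τ) (_ : IsPartitionOn c d m σ),
      ENNReal.ofReal ((gridSum p f n m τ σ) ^ (1 / p)) := rfl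

lemma cVar2d_def (p : ℝ) (f : ℝ → ℝ → ℝ) (a b c d : ℝ) :
    cVar2d p f a b c d = ⨆ (k : ℕ) (r : ℕ → ℝ × ℝ × ℝ × ℝ)
      (_ : IsRectPartition a b c d k r),
      ENNReal.ofReal ((rectSum p f k r) ^ (1 / p)) := rfl

lemma pVar2d_pow (p : ℝ) (hp : 0 < p) (f : ℝ → ℝ → ℝ) (a b c d : ℝ) :
    pVar2d p f a b c d ^ p = ⨆ (n : ℕ) (m : ℕ) (τ : ℕ → ℝ) (σ : ℕ → ℝ)
      (_ : IsPartitionOn a b n τ) (_ : IsPartitionOn c d m σ),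
      ENNReal.ofReal (gridSum p f n m τ σ) := by
  rw [pVar2d_def]
  rw [iSup_rpow _ hp]
  refine iSup_congr fun n => ?_
  rw [iSup_rpow _ hp]
  refine iSup_congr fun m => ?_
  rw [iSup_rpow _ hp]
  refine iSup_congr fun τ => ?_
  rw [iSup_rpow _ hp]
  refine iSup_congr fun σ => ?_
  rw [iSup_rpow _ hp]
  refine iSup_congr fun _ => ?_
  rw [iSup_rpow _ hp]
  refine iSup_congr fun _ => ?_
  rw [ofReal_rpow_one_div (gridSum_nonneg p f n m τ σ) hp]

lemma cVar2d_pow (p : ℝ) (hp : 0 < p) (f : ℝ → ℝ → ℝ) (a b c d : ℝ) :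
    cVar2d p f a b c d ^ p = ⨆ (k : ℕ) (r : ℕ → ℝ × ℝ × ℝ × ℝ)
      (_ : IsRectPartition a b c d k r),
      ENNReal.ofReal (rectSum p f k r) := by
  rw [cVar2d_def]
  rw [iSup_rpow _ hp]
  refine iSup_congr fun k => ?_
  rw [iSup_rpow _ hp]
  refine iSup_congr fun r => ?_
  rw [iSup_rpow _ hp]
  refine iSup_congr fun _ => ?_
  rw [ofReal_rpow_one_div (rectSum_nonneg p f k r) hp]

lemma le_pVar2d_pow {p : ℝ} (hp : 0 < p) {f : ℝ → ℝ → ℝ} {a b c d : ℝ}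
    {n m : ℕ} {τ σ : ℕ → ℝ} (hτ : IsPartitionOn a b n τ) (hσ : IsPartitionOn c d m σ) :
    ENNReal.ofReal (gridSum p f n m τ σ) ≤ pVar2d p f a b c d ^ p := by
  rw [pVar2d_pow p hp]
  refine le_trans ?_ (le_iSup _ n)
  refine le_trans ?_ (le_iSup _ m)
  refine le_trans ?_ (le_iSup _ τ)
  refine le_trans ?_ (le_iSup _ σ)
  refine le_trans ?_ (le_iSup _ hτ)
  exact le_iSup (fun _ : IsPartitionOn c d m σ => ENNReal.ofReal (gridSum p f n m τ σ)) hσ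

lemma le_cVar2d_pow {p : ℝ} (hp : 0 < p) {f : ℝ → ℝ → ℝ} {a b c d : ℝ}
    {k : ℕ} {r : ℕ → ℝ × ℝ × ℝ × ℝ} (hr : IsRectPartition a b c d k r) :
    ENNReal.ofReal (rectSum p f k r) ≤ cVar2d p f a b c d ^ p := by
  rw [cVar2d_pow p hp]
  refine le_trans ?_ (le_iSup _ k)
  refine le_trans ?_ (le_iSup _ r)
  exact le_iSup (fun _ : IsRectPartition a b c d k r => ENNReal.ofReal (rectSum p f k r)) hr

lemma cVar2d_pow_le {p : ℝ} (hp : 0 < p) {f : ℝ → ℝ → ℝ} {a b c d : ℝ} {Z : ℝ≥0∞}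
    (h : ∀ (k : ℕ) (r : ℕ → ℝ × ℝ × ℝ × ℝ), IsRectPartition a b c d k r →
      ENNReal.ofReal (rectSum p f k r) ≤ Z) :
    cVar2d p f a b c d ^ p ≤ Z := by
  rw [cVar2d_pow p hp]
  exact iSup_le fun k => iSup_le fun r => iSup_le fun hr => h k r hr

/-- finite sums of suprema in `ℝ≥0∞` -/
lemma sum_iSup {ι : Type*} [Nonempty ι] (g : ℕ → ι → ℝ≥0∞) (F : Finset ℕ) :
    ∑ i ∈ F, (⨆ x, g i x) = ⨆ c : ℕ → ι, ∑ i ∈ F, g i (c i) := by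
  classical
  induction F using Finset.induction with
  | empty => simp
  | @insert a F ha ih =>
      rw [Finset.sum_insert ha, ih, ENNReal.iSup_add]
      apply le_antisymm
      · refine iSup_le fun x => ?_
        rw [ENNReal.add_iSup]
        refine iSup_le fun c => ?_
        refine le_trans (le_of_eq ?_) (le_iSup _ (Function.update c a x))
        rw [Finset.sum_insert ha, Function.update_self]
        congr 1
        refine Finset.sum_congr rfl fun i hi => ?_
        rw [Function.update_of_ne (by rintro rfl; exact ha hi)]
      · refine iSup_le fun c => ?_
        rw [Finset.sum_insert ha]
        refine le_trans ?_ (le_iSup _ (c a))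
        rw [ENNReal.add_iSup]
        exact le_iSup (fun c' => g a (c a) + ∑ i ∈ F, g i (c' i)) c

lemma rectIncr_left_deg (f : ℝ → ℝ → ℝ) (s u v : ℝ) : rectIncr f s s u v = 0 := by
  rw [rectIncr]; ring

lemma rectIncr_right_deg (f : ℝ → ℝ → ℝ) (s t u : ℝ) : rectIncr f s t u u = 0 := by
  rw [rectIncr]; ring

lemma rectIncr_eq_sub (f : ℝ → ℝ → ℝ) (s t u v : ℝ) :
    rectIncr f s t u v = (f t v - f s v) - (f t u - f s u) := by
  rw [rectIncr]; ring

lemma rectIncr_eq_sub' (f : ℝ → ℝ → ℝ) (s t u v : ℝ) :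
    rectIncr f s t u v = (f t v - f t u) - (f s v - f s u) := by
  rw [rectIncr]; ring

/-- dyadic decomposition of a rectangle increment -/
lemma rect_decomp (f : ℝ → ℝ → ℝ) (x y : ℕ → ℝ) {L lx rx ly ry : ℕ}
    (hx : lx ≤ rx) (hrx : rx ≤ 2 ^ L) (hy : ly ≤ ry) (hry : ry ≤ 2 ^ L) :
    rectIncr f (x lx) (x rx) (y ly) (y ry)
      = ∑ px ∈ dyad L lx rx, ∑ py ∈ dyad L ly ry,
          rectIncr f (x (pieceLo L px)) (x (pieceHi L px))
            (y (pieceLo L py)) (y (pieceHi L py)) := by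
  have inner : ∀ px : ℕ × ℕ,
      ∑ py ∈ dyad L ly ry, rectIncr f (x (pieceLo L px)) (x (pieceHi L px))
          (y (pieceLo L py)) (y (pieceHi L py))
        = rectIncr f (x (pieceLo L px)) (x (pieceHi L px)) (y ly) (y ry) := by
    intro px
    have h := sum_dyad (fun j => f (x (pieceHi L px)) (y j) - f (x (pieceLo L px)) (y j)) hy hry
    calc ∑ py ∈ dyad L ly ry, rectIncr f (x (pieceLo L px)) (x (pieceHi L px))
            (y (pieceLo L py)) (y (pieceHi L py))
        = ∑ py ∈ dyad L ly ry,
            ((fun j => f (x (pieceHi L px)) (y j) - f (x (pieceLo L px)) (y j)) (pieceHi L py)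
              - (fun j => f (x (pieceHi L px)) (y j) - f (x (pieceLo L px)) (y j)) (pieceLo L py)) := by
          refine Finset.sum_congr rfl fun py _ => ?_
          simp only
          rw [rectIncr]; ring
      _ = _ := by rw [h, rectIncr]; ring
  rw [Finset.sum_congr rfl fun px _ => inner px]
  have h := sum_dyad (fun i => f (x i) (y ry) - f (x i) (y ly)) hx hrx
  symm
  calc ∑ px ∈ dyad L lx rx, rectIncr f (x (pieceLo L px)) (x (pieceHi L px)) (y ly) (y ry)
      = ∑ px ∈ dyad L lx rx,
          ((fun i => f (x i) (y ry) - f (x i) (y ly)) (pieceHi L px)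
            - (fun i => f (x i) (y ry) - f (x i) (y ly)) (pieceLo L px)) := by
        refine Finset.sum_congr rfl fun px _ => ?_
        simp only
        rw [rectIncr]; ring
    _ = _ := by rw [h, rectIncr]; ring

def Mdef (n : ℕ) : ℕ := Nat.clog 2 (2 * n + 2) + 1

noncomputable def CAdef (ρ : ℝ) (n : ℕ) : ℝ :=
  (4 * (Mdef n : ℝ) ^ 2) ^ ρ * (Mdef n : ℝ) ^ 2

lemma CAdef_nonneg (ρ : ℝ) (n : ℕ) : 0 ≤ CAdef ρ n := by
  apply mul_nonneg
  · exact Real.rpow_nonneg (by positivity) _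
  · positivity

set_option maxHeartbeats 1000000 in
/-- Core counting lemma: many disjoint rectangles with rectangle增 increment at least `v`
force the grid `ρ`-variation to be large. -/
lemma lemmaA {ρ : ℝ} (hρ : 1 ≤ ρ) (f : ℝ → ℝ → ℝ) (a b c d : ℝ) {v : ℝ} (hv : 0 < v)
    (r : ℕ → ℝ × ℝ × ℝ × ℝ) (S : Finset ℕ)
    (hord : ∀ i ∈ S, (r i).1 ≤ (r i).2.1 ∧ (r i).2.2.1 ≤ (r i).2.2.2)
    (hsub : ∀ i ∈ S, Set.Icc (r i).1 (r i).2.1 ×ˢ Set.Icc (r i).2.2.1 (r i).2.2.2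
      ⊆ Set.Icc a b ×ˢ Set.Icc c d)
    (hdisj : ∀ i ∈ S, ∀ j ∈ S, i ≠ j → Disjoint
        (Set.Ioo (r i).1 (r i).2.1 ×ˢ Set.Ioo (r i).2.2.1 (r i).2.2.2)
        (Set.Ioo (r j).1 (r j).2.1 ×ˢ Set.Ioo (r j).2.2.1 (r j).2.2.2))
    (hlb : ∀ i ∈ S, v ≤ |rectIncr f (r i).1 (r i).2.1 (r i).2.2.1 (r i).2.2.2|) :
    ENNReal.ofReal ((S.card : ℝ) * v ^ ρ) ≤
      ENNReal.ofReal (CAdef ρ S.card) * pVar2d ρ f a b c d ^ ρ := by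
  classical
  have hρ0 : (0:ℝ) < ρ := by linarith
  rcases S.eq_empty_or_nonempty with rfl | hS
  · simp
  -- nondegeneracy of the rectangles
  have hstrict : ∀ i ∈ S, (r i).1 < (r i).2.1 ∧ (r i).2.2.1 < (r i).2.2.2 := by
    intro i hi
    obtain ⟨h1, h2⟩ := hord i hi
    rcases eq_or_lt_of_le h1 with he | he
    · exfalso
      have := hlb i hi
      rw [← he, rectIncr_left_deg] at this
      simp at this
      linarith
    rcases eq_or_lt_of_le h2 with he2 | he2
    · exfalso
      have := hlb i hi
      rw [← he2, rectIncr_right_deg] at this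
      simp at this
      linarith
    exact ⟨he, he2⟩
  -- coordinates lie in [a,b] resp. [c,d]
  have hcoord : ∀ i ∈ S, (a ≤ (r i).1 ∧ (r i).2.1 ≤ b) ∧ (c ≤ (r i).2.2.1 ∧ (r i).2.2.2 ≤ d) := by
    intro i hi
    obtain ⟨hs1, hs2⟩ := hstrict i hi
    have h1 : ((r i).1, (r i).2.2.1) ∈ Set.Icc a b ×ˢ Set.Icc c d :=
      hsub i hi ⟨Set.mem_Icc.2 ⟨le_rfl, hs1.le⟩, Set.mem_Icc.2 ⟨le_rfl, hs2.le⟩⟩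
    have h2 : ((r i).2.1, (r i).2.2.2) ∈ Set.Icc a b ×ˢ Set.Icc c d :=
      hsub i hi ⟨Set.mem_Icc.2 ⟨hs1.le, le_rfl⟩, Set.mem_Icc.2 ⟨hs2.le, le_rfl⟩⟩
    rw [Set.mem_prod, Set.mem_Icc, Set.mem_Icc] at h1 h2
    exact ⟨⟨h1.1.1, h2.1.2⟩, ⟨h1.2.1, h2.2.2⟩⟩
  have hab : a ≤ b := by
    obtain ⟨i, hi⟩ := hS
    obtain ⟨⟨h1, h2⟩, _⟩ := hcoord i hi
    obtain ⟨hs1, _⟩ := hstrict i hi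
    linarith
  have hcd : c ≤ d := by
    obtain ⟨i, hi⟩ := hS
    obtain ⟨_, ⟨h1, h2⟩⟩ := hcoord i hi
    obtain ⟨_, hs2⟩ := hstrict i hi
    linarith
  -- coordinate sets
  set Tx : Finset ℝ := insert a (insert b (S.biUnion fun i => {(r i).1, (r i).2.1})) with hTxdef
  set Ty : Finset ℝ := insert c (insert d (S.biUnion fun i => {(r i).2.2.1, (r i).2.2.2}))
    with hTydef
  have hTxmem : ∀ x ∈ Tx, a ≤ x ∧ x ≤ b := by
    intro x hx
    rw [hTxdef] at hx
    simp only [Finset.mem_insert, Finset.mem_biUnion] at hx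
    rcases hx with rfl | rfl | ⟨i, hi, hx⟩
    · exact ⟨le_refl _, hab⟩
    · exact ⟨hab, le_refl _⟩
    · simp only [Finset.mem_insert, Finset.mem_singleton] at hx
      obtain ⟨⟨h1, h2⟩, _⟩ := hcoord i hi
      obtain ⟨hs1, _⟩ := hstrict i hi
      rcases hx with rfl | rfl
      · exact ⟨h1, by linarith⟩
      · exact ⟨by linarith, h2⟩
  have hTymem : ∀ y ∈ Ty, c ≤ y ∧ y ≤ d := by
    intro y hy
    rw [hTydef] at hy
    simp only [Finset.mem_insert, Finset.mem_biUnion] at hy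
    rcases hy with rfl | rfl | ⟨i, hi, hy⟩
    · exact ⟨le_refl _, hcd⟩
    · exact ⟨hcd, le_refl _⟩
    · simp only [Finset.mem_insert, Finset.mem_singleton] at hy
      obtain ⟨_, ⟨h1, h2⟩⟩ := hcoord i hi
      obtain ⟨_, hs2⟩ := hstrict i hi
      rcases hy with rfl | rfl
      · exact ⟨h1, by linarith⟩
      · exact ⟨by linarith, h2⟩
  have hTxcard : Tx.card ≤ 2 * S.card + 2 := by
    rw [hTxdef]
    calc (insert a (insert b (S.biUnion fun i => {(r i).1, (r i).2.1}))).card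
        ≤ (insert b (S.biUnion fun i => {(r i).1, (r i).2.1})).card + 1 :=
          Finset.card_insert_le _ _
      _ ≤ (S.biUnion fun i => {(r i).1, (r i).2.1}).card + 1 + 1 := by
          have := Finset.card_insert_le b (S.biUnion fun i => {(r i).1, (r i).2.1})
          omega
      _ ≤ 2 * S.card + 2 := by
          have h1 : (S.biUnion fun i => {(r i).1, (r i).2.1}).card
              ≤ ∑ i ∈ S, ({(r i).1, (r i).2.1} : Finset ℝ).card := Finset.card_biUnion_le
          have h2 : ∑ i ∈ S, ({(r i).1, (r i).2.1} : Finset ℝ).card ≤ ∑ i ∈ S, 2 := by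
            refine Finset.sum_le_sum fun i _ => ?_
            refine le_trans (Finset.card_insert_le _ _) ?_
            simp
          rw [Finset.sum_const, smul_eq_mul] at h2
          omega
  have hTycard : Ty.card ≤ 2 * S.card + 2 := by
    rw [hTydef]
    calc (insert c (insert d (S.biUnion fun i => {(r i).2.2.1, (r i).2.2.2}))).card
        ≤ (insert d (S.biUnion fun i => {(r i).2.2.1, (r i).2.2.2})).card + 1 :=
          Finset.card_insert_le _ _
      _ ≤ (S.biUnion fun i => {(r i).2.2.1, (r i).2.2.2}).card + 1 + 1 := by
          have := Finset.card_insert_le d (S.biUnion fun i => {(r i).2.2.1, (r i).2.2.2})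
          omega
      _ ≤ 2 * S.card + 2 := by
          have h1 : (S.biUnion fun i => {(r i).2.2.1, (r i).2.2.2}).card
              ≤ ∑ i ∈ S, ({(r i).2.2.1, (r i).2.2.2} : Finset ℝ).card := Finset.card_biUnion_le
          have h2 : ∑ i ∈ S, ({(r i).2.2.1, (r i).2.2.2} : Finset ℝ).card ≤ ∑ i ∈ S, 2 := by
            refine Finset.sum_le_sum fun i _ => ?_
            refine le_trans (Finset.card_insert_le _ _) ?_
            simp
          rw [Finset.sum_const, smul_eq_mul] at h2
          omega
  set L : ℕ := max (Nat.clog 2 Tx.card) (Nat.clog 2 Ty.card) with hLdef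
  have hLx : Tx.card ≤ 2 ^ L :=
    le_trans (Nat.le_pow_clog one_lt_two _) (Nat.pow_le_pow_right (by norm_num) (le_max_left _ _))
  have hLy : Ty.card ≤ 2 ^ L :=
    le_trans (Nat.le_pow_clog one_lt_two _) (Nat.pow_le_pow_right (by norm_num) (le_max_right _ _))
  have hLM : L + 1 ≤ Mdef S.card := by
    rw [Mdef]
    have h1 : Nat.clog 2 Tx.card ≤ Nat.clog 2 (2 * S.card + 2) := Nat.clog_mono_right _ hTxcard
    have h2 : Nat.clog 2 Ty.card ≤ Nat.clog 2 (2 * S.card + 2) := Nat.clog_mono_right _ hTycard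
    omega
  set xe : ℕ → ℝ := enum b Tx with hxedef
  set ye : ℕ → ℝ := enum d Ty with hyedef
  have hxmono : Monotone xe := enum_mono (fun x hx => (hTxmem x hx).2)
  have hymono : Monotone ye := enum_mono (fun y hy => (hTymem y hy).2)
  have hx0 : xe 0 = a := enum_zero (by rw [hTxdef]; simp) (fun x hx => (hTxmem x hx).1)
  have hy0 : ye 0 = c := enum_zero (by rw [hTydef]; simp) (fun y hy => (hTymem y hy).1)
  have hxtop : xe (2 ^ L) = b := enum_large hLx
  have hytop : ye (2 ^ L) = d := enum_large hLy
  -- indices for rectangle coordinates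
  have hidx : ∀ i ∈ S, ∃ lx rx ly ry : ℕ, lx < rx ∧ rx < Tx.card ∧ ly < ry ∧ ry < Ty.card ∧
      xe lx = (r i).1 ∧ xe rx = (r i).2.1 ∧ ye ly = (r i).2.2.1 ∧ ye ry = (r i).2.2.2 := by
    intro i hi
    have hm1 : (r i).1 ∈ Tx := by rw [hTxdef]; simp only [Finset.mem_insert, Finset.mem_biUnion]
                                  right; right; exact ⟨i, hi, by simp⟩
    have hm2 : (r i).2.1 ∈ Tx := by rw [hTxdef]; simp only [Finset.mem_insert, Finset.mem_biUnion]
                                    right; right; exact ⟨i, hi, by simp⟩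
    have hm3 : (r i).2.2.1 ∈ Ty := by rw [hTydef]
                                      simp only [Finset.mem_insert, Finset.mem_biUnion]
                                      right; right; exact ⟨i, hi, by simp⟩
    have hm4 : (r i).2.2.2 ∈ Ty := by rw [hTydef]
                                      simp only [Finset.mem_insert, Finset.mem_biUnion]
                                      right; right; exact ⟨i, hi, by simp⟩
    obtain ⟨l1, hl1, he1⟩ := enum_surj (b := b) hm1
    obtain ⟨l2, hl2, he2⟩ := enum_surj (b := b) hm2
    obtain ⟨l3, hl3, he3⟩ := enum_surj (b := d) hm3
    obtain ⟨l4, hl4, he4⟩ := enum_surj (b := d) hm4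
    rw [← hxedef] at he1 he2
    rw [← hyedef] at he3 he4
    obtain ⟨hs1, hs2⟩ := hstrict i hi
    refine ⟨l1, l2, l3, l4, ?_, hl2, ?_, hl4, he1, he2, he3, he4⟩
    · by_contra h
      have : xe l2 ≤ xe l1 := hxmono (by omega)
      rw [he1, he2] at this
      linarith
    · by_contra h
      have : ye l4 ≤ ye l3 := hymono (by omega)
      rw [he3, he4] at this
      linarith
  choose! lxf rxf lyf ryf hlt1 hc1 hlt2 hc2 heq1 heq2 heq3 heq4 using hidx
  -- choose a level pair and a dyadic piece with a large increment, for each i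
  set B : ℝ := v / (((L:ℝ) + 1) ^ 2 * 4) with hBdef
  have hBpos : 0 < B := by
    rw [hBdef]
    positivity
  have hkey : ∀ i ∈ S, ∃ s t qx qy : ℕ,
      (s, qx) ∈ dyad L (lxf i) (rxf i) ∧ (t, qy) ∈ dyad L (lyf i) (ryf i) ∧
      B ≤ |rectIncr f (xe (qx * 2 ^ (L - s))) (xe ((qx + 1) * 2 ^ (L - s)))
          (ye (qy * 2 ^ (L - t))) (ye ((qy + 1) * 2 ^ (L - t)))| := by
    intro i hi
    have hdec := rect_decomp f xe ye (L := L)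
      (le_of_lt (hlt1 i hi)) (by have := hc1 i hi; omega)
      (le_of_lt (hlt2 i hi)) (by have := hc2 i hi; omega)
    have hvi : v ≤ |rectIncr f (xe (lxf i)) (xe (rxf i)) (ye (lyf i)) (ye (ryf i))| := by
      rw [heq1 i hi, heq2 i hi, heq3 i hi, heq4 i hi]
      exact hlb i hi
    rw [hdec] at hvi
    -- bound by the sum of absolute values over the product of the two dyadic covers
    set D := (dyad L (lxf i) (rxf i)) ×ˢ (dyad L (lyf i) (ryf i)) with hDdef
    set w : ℕ × ℕ → ℕ × ℕ → ℝ := fun px py =>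
      rectIncr f (xe (pieceLo L px)) (xe (pieceHi L px)) (ye (pieceLo L py)) (ye (pieceHi L py))
      with hwdef
    have habs : v ≤ ∑ q ∈ D, |w q.1 q.2| := by
      refine le_trans hvi ?_
      refine le_trans (Finset.abs_sum_le_sum_abs _ _) ?_
      rw [hDdef, Finset.sum_product]
      exact Finset.sum_le_sum fun px _ => Finset.abs_sum_le_sum_abs _ _
    -- fiberwise over level pairs
    set R2 : Finset (ℕ × ℕ) := Finset.range (L+1) ×ˢ Finset.range (L+1) with hR2def
    have hmapsto : ∀ q ∈ D, (q.1.1, q.2.1) ∈ R2 := by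
      intro q hq
      rw [hDdef, Finset.mem_product] at hq
      rw [hR2def, Finset.mem_product, Finset.mem_range, Finset.mem_range]
      exact ⟨(mem_dyad.1 hq.1).1.1, (mem_dyad.1 hq.2).1.1⟩
    have hfib : ∑ st ∈ R2, ∑ q ∈ D.filter (fun q => (q.1.1, q.2.1) = st), |w q.1 q.2|
        = ∑ q ∈ D, |w q.1 q.2| := Finset.sum_fiberwise_of_maps_to hmapsto _
    have hR2card : R2.card = (L+1)^2 := by
      rw [hR2def, Finset.card_product, Finset.card_range]
      ring
    have hR2ne : R2.Nonempty := by
      rw [hR2def]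
      exact Finset.Nonempty.product ⟨0, by simp⟩ ⟨0, by simp⟩
    -- find a good level pair
    have hex1 : ∃ st ∈ R2, v / ((L:ℝ)+1)^2 ≤ ∑ q ∈ D.filter (fun q => (q.1.1, q.2.1) = st), |w q.1 q.2| := by
      by_contra hcon
      push_neg at hcon
      have : ∑ st ∈ R2, ∑ q ∈ D.filter (fun q => (q.1.1, q.2.1) = st), |w q.1 q.2|
          < ∑ st ∈ R2, v / ((L:ℝ)+1)^2 := by
        exact Finset.sum_lt_sum_of_nonempty hR2ne fun st hst => hcon st hst
      rw [hfib, Finset.sum_const, hR2card] at this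
      have heq : ((L+1)^2 : ℕ) • (v / ((L:ℝ)+1)^2) = v := by
        rw [nsmul_eq_mul]
        push_cast
        field_simp
      rw [heq] at this
      linarith
    obtain ⟨st, _, hst⟩ := hex1
    set F := D.filter (fun q => (q.1.1, q.2.1) = st) with hFdef
    have hFne : F.Nonempty := by
      rw [Finset.nonempty_iff_ne_empty]
      intro hFe
      rw [hFe, Finset.sum_empty] at hst
      have : (0:ℝ) < v / ((L:ℝ)+1)^2 := by positivity
      linarith
    have hFcard : F.card ≤ 4 := by
      have hsubF : F ⊆ ((dyad L (lxf i) (rxf i)).filter (fun p => p.1 = st.1)) ×ˢ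
          ((dyad L (lyf i) (ryf i)).filter (fun p => p.1 = st.2)) := by
        intro q hq
        rw [hFdef, Finset.mem_filter, hDdef, Finset.mem_product] at hq
        obtain ⟨⟨hq1, hq2⟩, hq3⟩ := hq
        rw [Finset.mem_product, Finset.mem_filter, Finset.mem_filter]
        have h1 : q.1.1 = st.1 := by rw [← hq3]
        have h2 : q.2.1 = st.2 := by rw [← hq3]
        exact ⟨⟨hq1, h1⟩, ⟨hq2, h2⟩⟩
      refine le_trans (Finset.card_le_card hsubF) ?_
      rw [Finset.card_product]
      have c1 := dyad_level_card (L := L) (l := lxf i) (r := rxf i) (by have := hc1 i hi; omega) st.1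
      have c2 := dyad_level_card (L := L) (l := lyf i) (r := ryf i) (by have := hc2 i hi; omega) st.2
      calc _ ≤ 2 * 2 := Nat.mul_le_mul c1 c2
        _ = 4 := rfl
    -- find a good piece within the fiber
    obtain ⟨q₀, hq₀F, hq₀max⟩ := Finset.exists_max_image F (fun q => |w q.1 q.2|) hFne
    have hsum_le : ∑ q ∈ F, |w q.1 q.2| ≤ (F.card : ℝ) * |w q₀.1 q₀.2| := by
      rw [← nsmul_eq_mul]
      exact Finset.sum_le_card_nsmul _ _ _ fun q hq => hq₀max q hq
    have hq₀big : B ≤ |w q₀.1 q₀.2| := by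
      have h4 : (F.card : ℝ) ≤ 4 := by exact_mod_cast hFcard
      have habs0 : (0:ℝ) ≤ |w q₀.1 q₀.2| := abs_nonneg _
      have : v / ((L:ℝ)+1)^2 ≤ 4 * |w q₀.1 q₀.2| := by
        refine le_trans hst (le_trans hsum_le ?_)
        exact mul_le_mul_of_nonneg_right h4 habs0
      rw [hBdef]
      rw [div_le_iff₀ (by positivity)] at this ⊢
      ring_nf at this ⊢
      linarith
    -- unpack q₀
    have hq₀D : q₀ ∈ D := by
      rw [hFdef, Finset.mem_filter] at hq₀F
      exact hq₀F.1
    rw [hDdef, Finset.mem_product] at hq₀D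
    refine ⟨q₀.1.1, q₀.2.1, q₀.1.2, q₀.2.2, by simpa using hq₀D.1, by simpa using hq₀D.2, ?_⟩
    have : w q₀.1 q₀.2 = rectIncr f (xe (q₀.1.2 * 2 ^ (L - q₀.1.1)))
        (xe ((q₀.1.2 + 1) * 2 ^ (L - q₀.1.1))) (ye (q₀.2.2 * 2 ^ (L - q₀.2.1)))
        (ye ((q₀.2.2 + 1) * 2 ^ (L - q₀.2.1))) := by
      simp only [hwdef, pieceLo, pieceHi]
    rw [← this]
    exact hq₀big
  choose! sf tf qxf qyf hdx hdy hwbig using hkey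
  -- pigeonhole over level pairs
  set R2 : Finset (ℕ × ℕ) := Finset.range (L+1) ×ˢ Finset.range (L+1) with hR2def
  have hmaps : ∀ i ∈ S, (sf i, tf i) ∈ R2 := by
    intro i hi
    rw [hR2def, Finset.mem_product, Finset.mem_range, Finset.mem_range]
    exact ⟨(mem_dyad.1 (hdx i hi)).1.1, (mem_dyad.1 (hdy i hi)).1.1⟩
  have hcardsum : ∑ st ∈ R2, (S.filter (fun i => (sf i, tf i) = st)).card = S.card :=
    (Finset.card_eq_sum_card_fiberwise hmaps).symm
  have hR2card : R2.card = (L+1)^2 := by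
    rw [hR2def, Finset.card_product, Finset.card_range]; ring
  have hpig : ∃ st ∈ R2, S.card ≤ (L+1)^2 * (S.filter (fun i => (sf i, tf i) = st)).card := by
    have hR2ne : R2.Nonempty := by
      rw [hR2def]
      exact Finset.Nonempty.product ⟨0, by simp⟩ ⟨0, by simp⟩
    by_contra hcon
    push_neg at hcon
    have hlt : ∑ st ∈ R2, (L+1)^2 * (S.filter (fun i => (sf i, tf i) = st)).card
        < ∑ st ∈ R2, S.card := Finset.sum_lt_sum_of_nonempty hR2ne hcon
    rw [← Finset.mul_sum, hcardsum, Finset.sum_const, smul_eq_mul, hR2card] at hlt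
    omega
  obtain ⟨st, hstR2, hstcard⟩ := hpig
  set S' := S.filter (fun i => (sf i, tf i) = st) with hS'def
  have hstL : st.1 ≤ L ∧ st.2 ≤ L := by
    rw [hR2def, Finset.mem_product, Finset.mem_range, Finset.mem_range] at hstR2
    omega
  -- the level grid
  set τ : ℕ → ℝ := fun j => xe (j * 2 ^ (L - st.1)) with hτdef
  set σ : ℕ → ℝ := fun j => ye (j * 2 ^ (L - st.2)) with hσdef
  have hτpart : IsPartitionOn a b (2 ^ st.1) τ := by
    refine ⟨fun j j' hj => hxmono (Nat.mul_le_mul_right _ hj), by simpa [hτdef] using hx0, ?_⟩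
    rw [hτdef]
    simp only
    rw [← pow_add]
    rw [show st.1 + (L - st.1) = L by omega]
    exact hxtop
  have hσpart : IsPartitionOn c d (2 ^ st.2) σ := by
    refine ⟨fun j j' hj => hymono (Nat.mul_le_mul_right _ hj), by simpa [hσdef] using hy0, ?_⟩
    rw [hσdef]
    simp only
    rw [← pow_add]
    rw [show st.2 + (L - st.2) = L by omega]
    exact hytop
  -- injective placement of the chosen pieces into the grid
  have hinj : Set.InjOn (fun i => (qxf i, qyf i)) ↑S' := by
    intro i hi j hj hij
    simp only [Finset.mem_coe, hS'def, Finset.mem_filter] at hi hj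
    obtain ⟨hiS, hist⟩ := hi
    obtain ⟨hjS, hjst⟩ := hj
    by_contra hne
    simp only [Prod.mk.injEq] at hij
    obtain ⟨hq1, hq2⟩ := hij
    -- the piece for i
    have hwb := hwbig i hiS
    have hxlt : xe (qxf i * 2 ^ (L - sf i)) < xe ((qxf i + 1) * 2 ^ (L - sf i)) := by
      rcases lt_or_ge (xe (qxf i * 2 ^ (L - sf i))) (xe ((qxf i + 1) * 2 ^ (L - sf i))) with h | h
      · exact h
      · exfalso
        have hle : xe (qxf i * 2 ^ (L - sf i)) ≤ xe ((qxf i + 1) * 2 ^ (L - sf i)) :=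
          hxmono (Nat.mul_le_mul_right _ (by omega))
        have heq : xe (qxf i * 2 ^ (L - sf i)) = xe ((qxf i + 1) * 2 ^ (L - sf i)) :=
          le_antisymm hle h
        rw [← heq, rectIncr_left_deg] at hwb
        simp at hwb
        linarith
    have hylt : ye (qyf i * 2 ^ (L - tf i)) < ye ((qyf i + 1) * 2 ^ (L - tf i)) := by
      rcases lt_or_ge (ye (qyf i * 2 ^ (L - tf i))) (ye ((qyf i + 1) * 2 ^ (L - tf i))) with h | h
      · exact h
      · exfalso
        have hle : ye (qyf i * 2 ^ (L - tf i)) ≤ ye ((qyf i + 1) * 2 ^ (L - tf i)) :=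
          hymono (Nat.mul_le_mul_right _ (by omega))
        have heq : ye (qyf i * 2 ^ (L - tf i)) = ye ((qyf i + 1) * 2 ^ (L - tf i)) :=
          le_antisymm hle h
        rw [← heq, rectIncr_right_deg] at hwb
        simp at hwb
        linarith
    -- the piece (as a real-plane rectangle) sits inside rectangle i and also inside rectangle j
    have hsubpiece : ∀ k, k ∈ S → (sf k, tf k) = st →
        Set.Ioo (xe (qxf k * 2 ^ (L - sf k))) (xe ((qxf k + 1) * 2 ^ (L - sf k)))
          ⊆ Set.Ioo (r k).1 (r k).2.1 := by
      intro k hk _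
      have hd := mem_dyad.1 (hdx k hk)
      obtain ⟨_, ⟨hc1', hc2'⟩, _⟩ := hd
      refine Set.Ioo_subset_Ioo ?_ ?_
      · rw [← heq1 k hk]
        exact hxmono hc1'
      · rw [← heq2 k hk]
        exact hxmono hc2'
    have hsubpiece' : ∀ k, k ∈ S → (sf k, tf k) = st →
        Set.Ioo (ye (qyf k * 2 ^ (L - tf k))) (ye ((qyf k + 1) * 2 ^ (L - tf k)))
          ⊆ Set.Ioo (r k).2.2.1 (r k).2.2.2 := by
      intro k hk _
      have hd := mem_dyad.1 (hdy k hk)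
      obtain ⟨_, ⟨hc1', hc2'⟩, _⟩ := hd
      refine Set.Ioo_subset_Ioo ?_ ?_
      · rw [← heq3 k hk]
        exact hymono hc1'
      · rw [← heq4 k hk]
        exact hymono hc2'
    -- a point in the common piece
    obtain ⟨z1, hz1⟩ := Set.nonempty_Ioo.2 hxlt
    obtain ⟨z2, hz2⟩ := Set.nonempty_Ioo.2 hylt
    have hzi : (z1, z2) ∈ Set.Ioo (r i).1 (r i).2.1 ×ˢ Set.Ioo (r i).2.2.1 (r i).2.2.2 :=
      ⟨hsubpiece i hiS hist hz1, hsubpiece' i hiS hist hz2⟩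
    have hzj : (z1, z2) ∈ Set.Ioo (r j).1 (r j).2.1 ×ˢ Set.Ioo (r j).2.2.1 (r j).2.2.2 := by
      constructor
      · apply hsubpiece j hjS hjst
        have e1 : sf j = sf i := by rw [show sf j = st.1 from congrArg Prod.fst hjst,
            show sf i = st.1 from congrArg Prod.fst hist]
        rw [e1, ← hq1]
        exact hz1
      · apply hsubpiece' j hjS hjst
        have e2 : tf j = tf i := by rw [show tf j = st.2 from congrArg Prod.snd hjst,
            show tf i = st.2 from congrArg Prod.snd hist]
        rw [e2, ← hq2]
        exact hz2
    exact Set.disjoint_left.1 (hdisj i hiS j hjS hne) hzi hzj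
  -- the grid sum dominates the pieces
  have hqxlt : ∀ i ∈ S', qxf i < 2 ^ st.1 ∧ qyf i < 2 ^ st.2 := by
    intro i hi
    rw [hS'def, Finset.mem_filter] at hi
    obtain ⟨hiS, hist⟩ := hi
    have hd := mem_dyad.1 (hdx i hiS)
    have hd' := mem_dyad.1 (hdy i hiS)
    obtain ⟨_, ⟨_, hc2'⟩, _⟩ := hd
    obtain ⟨_, ⟨_, hc2''⟩, _⟩ := hd'
    have hrx2L : rxf i ≤ 2 ^ L := by have := hc1 i hiS; omega
    have hry2L : ryf i ≤ 2 ^ L := by have := hc2 i hiS; omega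
    have e1 : sf i = st.1 := congrArg Prod.fst hist
    have e2 : tf i = st.2 := congrArg Prod.snd hist
    constructor
    · have h2L : (2:ℕ) ^ L = 2 ^ st.1 * 2 ^ (L - st.1) := by
        rw [← pow_add]
        congr 1
        omega
      have := le_trans hc2' hrx2L
      rw [e1] at this
      rw [h2L] at this
      have hpos : 0 < 2 ^ (L - st.1) := Nat.pow_pos (by norm_num)
      have := Nat.le_of_mul_le_mul_right this hpos
      omega
    · have h2L : (2:ℕ) ^ L = 2 ^ st.2 * 2 ^ (L - st.2) := by
        rw [← pow_add]
        congr 1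
        omega
      have := le_trans hc2'' hry2L
      rw [e2] at this
      rw [h2L] at this
      have hpos : 0 < 2 ^ (L - st.2) := Nat.pow_pos (by norm_num)
      have := Nat.le_of_mul_le_mul_right this hpos
      omega
  have hgrid_ge : (S'.card : ℝ) * B ^ ρ ≤ gridSum ρ f (2 ^ st.1) (2 ^ st.2) τ σ := by
    have hterm : ∀ i ∈ S', B ^ ρ ≤
        |rectIncr f (τ (qxf i)) (τ (qxf i + 1)) (σ (qyf i)) (σ (qyf i + 1))| ^ ρ := by
      intro i hi
      rw [hS'def, Finset.mem_filter] at hi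
      obtain ⟨hiS, hist⟩ := hi
      have e1 : sf i = st.1 := congrArg Prod.fst hist
      have e2 : tf i = st.2 := congrArg Prod.snd hist
      have hwb := hwbig i hiS
      rw [e1, e2] at hwb
      refine Real.rpow_le_rpow hBpos.le ?_ hρ0.le
      rw [hτdef, hσdef]
      simp only
      exact hwb
    -- sum over the image inside the grid product
    have himg : ∑ i ∈ S', |rectIncr f (τ (qxf i)) (τ (qxf i + 1)) (σ (qyf i)) (σ (qyf i + 1))| ^ ρ
        ≤ gridSum ρ f (2 ^ st.1) (2 ^ st.2) τ σ := by
      rw [gridSum, ← Finset.sum_product']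
      set e : ℕ → ℕ × ℕ := fun i => (qxf i, qyf i) with hedef
      set G : ℕ × ℕ → ℝ := fun q => |rectIncr f (τ q.1) (τ (q.1 + 1)) (σ q.2) (σ (q.2 + 1))| ^ ρ
        with hGdef
      have h1 : ∑ i ∈ S', G (e i) = ∑ q ∈ S'.image e, G q := (Finset.sum_image (by
        intro i hi j hj hij
        exact hinj hi hj hij)).symm
      have h2 : S'.image e ⊆ Finset.range (2 ^ st.1) ×ˢ Finset.range (2 ^ st.2) := by
        intro q hq
        rw [Finset.mem_image] at hq
        obtain ⟨i, hi, rfl⟩ := hq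
        rw [Finset.mem_product, Finset.mem_range, Finset.mem_range]
        exact hqxlt i hi
      calc ∑ i ∈ S', G (e i) = ∑ q ∈ S'.image e, G q := h1
        _ ≤ ∑ q ∈ Finset.range (2 ^ st.1) ×ˢ Finset.range (2 ^ st.2), G q := by
            refine Finset.sum_le_sum_of_subset_of_nonneg h2 fun q _ _ => ?_
            rw [hGdef]
            exact Real.rpow_nonneg (abs_nonneg _) _
    calc (S'.card : ℝ) * B ^ ρ = S'.card • (B ^ ρ) := by rw [nsmul_eq_mul]
      _ ≤ ∑ i ∈ S', |rectIncr f (τ (qxf i)) (τ (qxf i + 1)) (σ (qyf i)) (σ (qyf i + 1))| ^ ρ :=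
          Finset.card_nsmul_le_sum _ _ _ hterm
      _ ≤ _ := himg
  -- final assembly
  have hvB : v ^ ρ = (((L:ℝ)+1)^2 * 4) ^ ρ * B ^ ρ := by
    rw [← Real.mul_rpow (by positivity) hBpos.le]
    congr 1
    rw [hBdef]
    field_simp
  have hreal : (S.card : ℝ) * v ^ ρ ≤
      (((L:ℝ)+1)^2 * (((L:ℝ)+1)^2 * 4) ^ ρ) * gridSum ρ f (2 ^ st.1) (2 ^ st.2) τ σ := by
    have h1 : (S.card : ℝ) ≤ ((L:ℝ)+1)^2 * S'.card := by
      have := hstcard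
      rw [hS'def]
      push_cast
      exact_mod_cast this
    have hBρ : (0:ℝ) ≤ B ^ ρ := Real.rpow_nonneg hBpos.le _
    calc (S.card : ℝ) * v ^ ρ ≤ (((L:ℝ)+1)^2 * S'.card) * v ^ ρ := by
          refine mul_le_mul_of_nonneg_right h1 ?_
          exact Real.rpow_nonneg hv.le _
      _ = (((L:ℝ)+1)^2 * (((L:ℝ)+1)^2 * 4) ^ ρ) * ((S'.card : ℝ) * B ^ ρ) := by
          rw [hvB]; ring
      _ ≤ _ := by
          refine mul_le_mul_of_nonneg_left hgrid_ge ?_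
          positivity
  have hconst : (((L:ℝ)+1)^2 * (((L:ℝ)+1)^2 * 4) ^ ρ) ≤ CAdef ρ S.card := by
    rw [CAdef]
    have hLM' : ((L:ℝ)+1) ≤ (Mdef S.card : ℝ) := by exact_mod_cast hLM
    have h0 : (0:ℝ) ≤ (L:ℝ)+1 := by positivity
    have hsq : ((L:ℝ)+1)^2 ≤ (Mdef S.card : ℝ)^2 := by
      apply pow_le_pow_left₀ h0 hLM'
    have hrp : (((L:ℝ)+1)^2 * 4) ^ ρ ≤ (4 * (Mdef S.card : ℝ)^2) ^ ρ := by
      apply Real.rpow_le_rpow (by positivity) (by linarith) hρ0.le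
    calc ((L:ℝ)+1)^2 * (((L:ℝ)+1)^2 * 4) ^ ρ
        ≤ (Mdef S.card : ℝ)^2 * ((4 * (Mdef S.card : ℝ)^2)) ^ ρ := by
          apply mul_le_mul hsq hrp (by positivity) (by positivity)
      _ = _ := by ring
  calc ENNReal.ofReal ((S.card : ℝ) * v ^ ρ)
      ≤ ENNReal.ofReal (CAdef ρ S.card * gridSum ρ f (2 ^ st.1) (2 ^ st.2) τ σ) := by
        apply ENNReal.ofReal_le_ofReal
        refine le_trans hreal ?_
        exact mul_le_mul_of_nonneg_right hconst (gridSum_nonneg _ _ _ _ _ _)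
    _ = ENNReal.ofReal (CAdef ρ S.card) * ENNReal.ofReal (gridSum ρ f (2 ^ st.1) (2 ^ st.2) τ σ) := by
        rw [ENNReal.ofReal_mul (CAdef_nonneg ρ S.card)]
    _ ≤ ENNReal.ofReal (CAdef ρ S.card) * pVar2d ρ f a b c d ^ ρ := by
        exact mul_le_mul_right (le_pVar2d_pow hρ0 hτpart hσpart) _

noncomputable def psi (ρ ρ' : ℝ) (n : ℕ) : ℝ≥0∞ :=
  (ENNReal.ofReal (CAdef ρ (n + 1)) / ((n + 1 : ℕ) : ℝ≥0∞)) ^ (ρ' / ρ)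

lemma clog_le_log {m : ℕ} (hm : 2 ≤ m) :
    (Nat.clog 2 m : ℝ) ≤ Real.log m / Real.log 2 + 1 := by
  have hlog2 : (0:ℝ) < Real.log 2 := Real.log_pos (by norm_num)
  have h1 : 1 ≤ Nat.clog 2 m := by
    by_contra h
    have h0 : Nat.clog 2 m = 0 := by omega
    have := Nat.le_pow_clog (one_lt_two) m
    rw [h0] at this
    norm_num at this
    omega
  have h2 : (2:ℕ) ^ (Nat.clog 2 m - 1) < m := by
    have h := Nat.pow_pred_clog_lt_self (b := 2) one_lt_two (x := m) (by omega)
    rwa [Nat.pred_eq_sub_one] at h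
  have h3 : ((2:ℝ)) ^ ((Nat.clog 2 m - 1 : ℕ)) < (m:ℝ) := by exact_mod_cast h2
  have h4 : ((Nat.clog 2 m - 1 : ℕ) : ℝ) * Real.log 2 < Real.log m := by
    have := Real.log_lt_log (by positivity) h3
    rwa [Real.log_pow] at this
  have h5 : ((Nat.clog 2 m - 1 : ℕ) : ℝ) = (Nat.clog 2 m : ℝ) - 1 := by
    rw [Nat.cast_sub h1]
    norm_num
  rw [h5] at h4
  rw [← sub_le_iff_le_add, le_div_iff₀ hlog2]
  nlinarith

lemma log_le_rpow {x τ : ℝ} (hx : 1 ≤ x) (hτ : 0 < τ) :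
    Real.log x ≤ x ^ τ / τ := by
  have h1 : Real.log (x ^ τ) ≤ x ^ τ - 1 :=
    Real.log_le_sub_one_of_pos (Real.rpow_pos_of_pos (by linarith) τ)
  rw [Real.log_rpow (by linarith)] at h1
  rw [le_div_iff₀ hτ]
  nlinarith [Real.rpow_nonneg (show (0:ℝ) ≤ x by linarith) τ]

lemma one_add_log_le {x τ : ℝ} (hx : 1 ≤ x) (hτ : 0 < τ) :
    1 + Real.log x ≤ (1 + 1/τ) * x ^ τ := by
  have h1 := log_le_rpow hx hτ
  have h2 : (1:ℝ) ≤ x ^ τ := by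
    have h := Real.rpow_le_rpow zero_le_one hx hτ.le
    rwa [Real.one_rpow] at h
  have hexp : (1 + 1/τ) * x ^ τ = x ^ τ + x ^ τ / τ := by
    field_simp
  rw [hexp]
  linarith

lemma psi_tsum_ne_top {ρ ρ' : ℝ} (hρ : 1 ≤ ρ) (hρρ' : ρ < ρ') :
    ∑' n, psi ρ ρ' n ≠ ∞ := by
  have hρ0 : (0:ℝ) < ρ := by linarith
  set γ : ℝ := ρ' / ρ with hγdef
  have hγ1 : 1 < γ := (one_lt_div hρ0).2 hρρ'
  set θ : ℝ := (γ - 1) / (2 * γ) with hθdef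
  have hθpos : 0 < θ := by
    rw [hθdef]
    apply div_pos <;> linarith
  have hθlt : θ < 1 := by
    rw [hθdef, div_lt_one (by linarith)]
    linarith
  set β : ℝ := 2 * ρ + 2 with hβdef
  have hβpos : (0:ℝ) < β := by rw [hβdef]; linarith
  set τ : ℝ := θ / β with hτdef
  have hτpos : 0 < τ := div_pos hθpos hβpos
  set e : ℝ := (1 - θ) * γ with hedef
  have he1 : 1 < e := by
    rw [hedef, hθdef]
    have h2γ : (0:ℝ) < 2 * γ := by linarith
    rw [show (1 - (γ - 1) / (2 * γ)) * γ = ((2 * γ) - (γ - 1)) / (2 * γ) * γ by field_simp]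
    rw [div_mul_eq_mul_div, lt_div_iff₀ h2γ]
    nlinarith
  have hlog2 : (0:ℝ) < Real.log 2 := Real.log_pos (by norm_num)
  set c₁ : ℝ := 1 / Real.log 2 + 2 with hc₁def
  have hc₁pos : 0 < c₁ := by positivity
  -- step 1 : M is at most logarithmic
  have hM : ∀ n : ℕ, (Mdef (n+1) : ℝ) ≤ c₁ * (1 + Real.log (2*(n:ℝ)+4)) := by
    intro n
    have hm2 : 2 ≤ 2 * (n+1) + 2 := by omega
    have h1 := clog_le_log hm2
    have hcast : ((2 * (n+1) + 2 : ℕ) : ℝ) = 2*(n:ℝ)+4 := by push_cast; ring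
    rw [hcast] at h1
    have hn0 : (0:ℝ) ≤ (n:ℝ) := Nat.cast_nonneg n
    have hA : (0:ℝ) ≤ Real.log (2*(n:ℝ)+4) := Real.log_nonneg (by linarith)
    have hMle : (Mdef (n+1) : ℝ) = (Nat.clog 2 (2*(n+1)+2) : ℝ) + 1 := by
      rw [Mdef]; push_cast; ring
    rw [hMle, hc₁def]
    set A := Real.log (2*(n:ℝ)+4)
    have hdiv : A / Real.log 2 ≤ (1/Real.log 2) * (1 + A) := by
      rw [div_eq_mul_inv, one_div]
      have h := mul_le_mul_of_nonneg_right (show A ≤ 1 + A by linarith)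
        (inv_nonneg.2 hlog2.le)
      linarith
    have hexp : (1/Real.log 2 + 2) * (1 + A) = (1/Real.log 2) * (1 + A) + 2 * (1 + A) := by
      ring
    linarith
  -- step 2 : CA is at most a small power
  have hMpos : ∀ n : ℕ, (1:ℝ) ≤ (Mdef (n+1) : ℝ) := by
    intro n
    rw [Mdef]
    push_cast
    linarith [Nat.cast_nonneg (α := ℝ) (Nat.clog 2 (2*(n+1)+2))]
  set c₃ : ℝ := c₁ * (1 + 1/τ) * 6 ^ τ with hc₃def
  have h6τ : (0:ℝ) < 6 ^ τ := Real.rpow_pos_of_pos (by norm_num) _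
  have h11τ : (0:ℝ) < 1 + 1/τ := by positivity
  have hc₃pos : 0 < c₃ := by
    rw [hc₃def]
    positivity
  have hMn : ∀ n : ℕ, (Mdef (n+1) : ℝ) ≤ c₃ * ((n:ℝ)+1) ^ τ := by
    intro n
    have h1 := hM n
    have hn0 : (0:ℝ) ≤ (n:ℝ) := Nat.cast_nonneg n
    have hx1 : (1:ℝ) ≤ 2 * (n:ℝ) + 4 := by linarith
    have h2 : 1 + Real.log (2 * (n:ℝ) + 4) ≤ (1 + 1/τ) * (2 * (n:ℝ) + 4) ^ τ :=
      one_add_log_le hx1 hτpos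
    have h3 : (2 * (n:ℝ) + 4) ^ τ ≤ (6 * ((n:ℝ)+1)) ^ τ :=
      Real.rpow_le_rpow (by linarith) (by linarith) hτpos.le
    have h4 : ((6:ℝ) * ((n:ℝ)+1)) ^ τ = 6 ^ τ * ((n:ℝ)+1) ^ τ :=
      Real.mul_rpow (by norm_num) (by linarith)
    calc (Mdef (n+1) : ℝ) ≤ c₁ * (1 + Real.log (2*(n:ℝ)+4)) := h1
      _ ≤ c₁ * ((1 + 1/τ) * (2 * (n:ℝ) + 4) ^ τ) := by
          apply mul_le_mul_of_nonneg_left h2 hc₁pos.le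
      _ ≤ c₁ * ((1 + 1/τ) * (6 ^ τ * ((n:ℝ)+1) ^ τ)) := by
          apply mul_le_mul_of_nonneg_left ?_ hc₁pos.le
          rw [← h4]
          apply mul_le_mul_of_nonneg_left h3 h11τ.le
      _ = c₃ * ((n:ℝ)+1) ^ τ := by rw [hc₃def]; ring
  set c₂ : ℝ := 4 ^ ρ * c₃ ^ β with hc₂def
  have h4ρ : (0:ℝ) < 4 ^ ρ := Real.rpow_pos_of_pos (by norm_num) _
  have hc₃β : (0:ℝ) < c₃ ^ β := Real.rpow_pos_of_pos hc₃pos _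
  have hc₂pos : 0 < c₂ := by rw [hc₂def]; positivity
  have hCA : ∀ n : ℕ, CAdef ρ (n+1) ≤ c₂ * ((n:ℝ)+1) ^ θ := by
    intro n
    have hM1 := hMpos n
    have hMnn : (0:ℝ) < (Mdef (n+1) : ℝ) := by linarith
    have h1 : CAdef ρ (n+1) = 4 ^ ρ * (Mdef (n+1) : ℝ) ^ β := by
      rw [CAdef, hβdef]
      have e1 : ((Mdef (n+1) : ℝ)) ^ (2:ℕ) = (Mdef (n+1) : ℝ) ^ ((2:ℕ):ℝ) :=
        (Real.rpow_natCast _ 2).symm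
      rw [Real.mul_rpow (by norm_num) (by positivity), e1, ← Real.rpow_mul hMnn.le,
        mul_assoc, ← Real.rpow_add hMnn]
      push_cast
      ring_nf
    rw [h1]
    have h4 : (Mdef (n+1) : ℝ) ^ β ≤ (c₃ * ((n:ℝ)+1) ^ τ) ^ β :=
      Real.rpow_le_rpow hMnn.le (hMn n) hβpos.le
    have hn1 : (0:ℝ) < (n:ℝ)+1 := by positivity
    have h5 : (c₃ * ((n:ℝ)+1) ^ τ) ^ β = c₃ ^ β * ((n:ℝ)+1) ^ θ := by
      rw [Real.mul_rpow hc₃pos.le (Real.rpow_nonneg hn1.le _)]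
      congr 1
      rw [← Real.rpow_mul hn1.le]
      congr 1
      rw [hτdef]
      field_simp
    calc 4 ^ ρ * (Mdef (n+1) : ℝ) ^ β ≤ 4 ^ ρ * (c₃ ^ β * ((n:ℝ)+1) ^ θ) := by
          rw [← h5]
          apply mul_le_mul_of_nonneg_left h4 h4ρ.le
      _ = c₂ * ((n:ℝ)+1) ^ θ := by rw [hc₂def]; ring
  -- step 3 : pointwise bound on psi
  have hγpos : (0:ℝ) < γ := by linarith
  have hpsibound : ∀ n : ℕ, psi ρ ρ' n ≤ ENNReal.ofReal (c₂ ^ γ * (((n:ℝ)+1) ^ e)⁻¹) := by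
    intro n
    have hnpos : (0:ℝ) < (n:ℝ) + 1 := by positivity
    have hCAnn : 0 ≤ CAdef ρ (n+1) := CAdef_nonneg _ _
    have h1 : ((n + 1 : ℕ) : ℝ≥0∞) = ENNReal.ofReal ((n:ℝ)+1) := by
      rw [← ENNReal.ofReal_natCast]
      congr 1
      push_cast
      ring
    rw [psi, h1, ← ENNReal.ofReal_div_of_pos hnpos,
      ENNReal.ofReal_rpow_of_nonneg (by positivity) (by rw [← hγdef]; positivity)]
    apply ENNReal.ofReal_le_ofReal
    rw [← hγdef]
    have h2 : CAdef ρ (n+1) / ((n:ℝ)+1) ≤ c₂ * ((n:ℝ)+1) ^ (θ - 1) := by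
      have heq : (c₂ * ((n:ℝ)+1) ^ θ) / ((n:ℝ)+1) = c₂ * ((n:ℝ)+1) ^ (θ - 1) := by
        rw [Real.rpow_sub hnpos, Real.rpow_one, mul_div_assoc]
      rw [← heq]
      gcongr
      exact hCA n
    have h3 : (CAdef ρ (n+1) / ((n:ℝ)+1)) ^ γ ≤ (c₂ * ((n:ℝ)+1) ^ (θ - 1)) ^ γ :=
      Real.rpow_le_rpow (by positivity) h2 hγpos.le
    refine h3.trans_eq ?_
    rw [Real.mul_rpow hc₂pos.le (Real.rpow_nonneg hnpos.le _), ← Real.rpow_mul hnpos.le]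
    have hex : (θ - 1) * γ = -e := by rw [hedef]; ring
    rw [hex, Real.rpow_neg hnpos.le]
  -- step 4 : summability
  have hsummable : Summable (fun n : ℕ => c₂ ^ γ * (((n:ℝ)+1) ^ e)⁻¹) := by
    apply Summable.mul_left
    have hbase : Summable (fun n : ℕ => 1 / ((n:ℕ):ℝ) ^ e) := Real.summable_one_div_nat_rpow.2 he1
    have h := (summable_nat_add_iff (f := fun n : ℕ => 1 / ((n:ℕ):ℝ) ^ e) 1).2 hbase
    have heq : (fun n : ℕ => 1 / (((n+1:ℕ)):ℝ) ^ e) = (fun n : ℕ => (((n:ℝ)+1) ^ e)⁻¹) := by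
      funext n
      rw [one_div]
      congr 2
      push_cast
      ring
    rw [← heq]
    exact h
  have heq2 := ENNReal.ofReal_tsum_of_nonneg
    (f := fun n : ℕ => c₂ ^ γ * (((n:ℝ)+1) ^ e)⁻¹) (fun n => by positivity) hsummable
  have hle : ∑' n, psi ρ ρ' n ≤ ENNReal.ofReal (∑' n : ℕ, c₂ ^ γ * (((n:ℝ)+1) ^ e)⁻¹) :=
    (ENNReal.tsum_le_tsum hpsibound).trans_eq heq2.symm
  exact ne_top_of_le_ne_top ENNReal.ofReal_ne_top hle

/-- Master estimate: for any family of ordered, pairwise interior-disjoint subrectangles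
of `[a,b] × [c,d]`, the `ρ'`-sum of rectangle increments is controlled by the grid
`ρ`-variation. -/
lemma master {ρ ρ' : ℝ} (hρ : 1 ≤ ρ) (hρρ' : ρ < ρ') :
    ∃ K : ℝ≥0∞, K ≠ 0 ∧ K ≠ ∞ ∧ ∀ (f : ℝ → ℝ → ℝ) (a b c d : ℝ) (k : ℕ)
      (r : ℕ → ℝ × ℝ × ℝ × ℝ),
      (∀ i < k, (r i).1 ≤ (r i).2.1 ∧ (r i).2.2.1 ≤ (r i).2.2.2) →
      (∀ i < k, Set.Icc (r i).1 (r i).2.1 ×ˢ Set.Icc (r i).2.2.1 (r i).2.2.2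
        ⊆ Set.Icc a b ×ˢ Set.Icc c d) →
      (∀ i < k, ∀ j < k, i ≠ j → Disjoint
        (Set.Ioo (r i).1 (r i).2.1 ×ˢ Set.Ioo (r i).2.2.1 (r i).2.2.2)
        (Set.Ioo (r j).1 (r j).2.1 ×ˢ Set.Ioo (r j).2.2.1 (r j).2.2.2)) →
      ENNReal.ofReal (rectSum ρ' f k r) ≤ K * pVar2d ρ f a b c d ^ ρ' := by
  classical
  have hρ0 : (0:ℝ) < ρ := by linarith
  have hρ'0 : (0:ℝ) < ρ' := by linarith
  set γ : ℝ := ρ' / ρ with hγdef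
  have hγ1 : 1 < γ := (one_lt_div hρ0).2 hρρ'
  have hγpos : (0:ℝ) < γ := by linarith
  have hργ : ρ * γ = ρ' := by
    rw [hγdef]
    field_simp
  refine ⟨∑' n, psi ρ ρ' n + 1, by simp, ?_, ?_⟩
  · have := psi_tsum_ne_top hρ hρρ'
    simp [this]
  intro f a b c d k r hord hsub hdisj
  set w : ℕ → ℝ := fun i => |rectIncr f (r i).1 (r i).2.1 (r i).2.2.1 (r i).2.2.2| with hwdef
  set P : Finset ℕ := (Finset.range k).filter (fun i => 0 < w i) with hPdef
  -- reduce to indices with positive increment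
  have hsum1 : rectSum ρ' f k r = ∑ i ∈ P, w i ^ ρ' := by
    rw [rectSum, hPdef]
    rw [Finset.sum_filter]
    refine Finset.sum_congr rfl fun i _ => ?_
    by_cases h : 0 < w i
    · rw [if_pos h]
    · have h0 : w i = 0 := le_antisymm (by rwa [not_lt] at h) (abs_nonneg _)
      rw [if_neg h, hwdef] at *
      simp only at h0
      rw [h0, Real.zero_rpow hρ'0.ne']
  -- キー: the rank function
  set key : ℕ → ℝ ×ₗ ℕ := fun i => toLex (-(w i), i) with hkeydef
  set rkS : ℕ → Finset ℕ := fun i => (Finset.range k).filter (fun j => key j ≤ key i)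
    with hrkSdef
  set nk : ℕ → ℕ := fun i => (rkS i).card with hnkdef
  have hkeyinj : ∀ i j, key i = key j → i = j := by
    intro i j h
    rw [hkeydef] at h
    have := congrArg (fun p => (ofLex p).2) h
    simpa using this
  have hself : ∀ i ∈ Finset.range k, i ∈ rkS i := by
    intro i hi
    rw [hrkSdef, Finset.mem_filter]
    exact ⟨hi, le_refl _⟩
  have hnk1 : ∀ i ∈ Finset.range k, 1 ≤ nk i := by
    intro i hi
    rw [hnkdef]
    exact Finset.card_pos.2 ⟨i, hself i hi⟩
  have hwge : ∀ i, ∀ j ∈ rkS i, w i ≤ w j := by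
    intro i j hj
    rw [hrkSdef, Finset.mem_filter] at hj
    obtain ⟨_, hkey⟩ := hj
    rw [hkeydef, Prod.Lex.le_iff] at hkey
    rcases hkey with h | ⟨h, _⟩
    · simp only [ofLex_toLex] at h
      linarith
    · simp only [ofLex_toLex] at h
      linarith
  have hnkinj : ∀ i ∈ Finset.range k, ∀ j ∈ Finset.range k, i ≠ j → nk i ≠ nk j := by
    intro i hi j hj hne
    have hkne : key i ≠ key j := fun h => hne (hkeyinj _ _ h)
    rcases lt_or_gt_of_ne hkne with h | h
    · have hsub' : rkS i ⊆ rkS j := by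
        intro x hx
        rw [hrkSdef, Finset.mem_filter] at hx ⊢
        exact ⟨hx.1, le_trans hx.2 h.le⟩
      have hstrict : j ∉ rkS i := by
        rw [hrkSdef, Finset.mem_filter]
        rintro ⟨_, hle⟩
        exact absurd (lt_of_le_of_lt hle h) (lt_irrefl _)
      have : nk i < nk j := Finset.card_lt_card ⟨hsub', fun hsub'' => hstrict (hsub'' (hself j hj))⟩
      omega
    · have hsub' : rkS j ⊆ rkS i := by
        intro x hx
        rw [hrkSdef, Finset.mem_filter] at hx ⊢
        exact ⟨hx.1, le_trans hx.2 h.le⟩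
      have hstrict : i ∉ rkS j := by
        rw [hrkSdef, Finset.mem_filter]
        rintro ⟨_, hle⟩
        exact absurd (lt_of_le_of_lt hle h) (lt_irrefl _)
      have : nk j < nk i := Finset.card_lt_card ⟨hsub', fun hsub'' => hstrict (hsub'' (hself i hi))⟩
      omega
  -- per-index bound via Lemma A
  have hper : ∀ i ∈ P, ENNReal.ofReal (w i ^ ρ')
      ≤ psi ρ ρ' (nk i - 1) * pVar2d ρ f a b c d ^ ρ' := by
    intro i hiP
    rw [hPdef, Finset.mem_filter] at hiP
    obtain ⟨hik, hwpos⟩ := hiP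
    have hrange : rkS i ⊆ Finset.range k := by
      rw [hrkSdef]
      exact Finset.filter_subset _ _
    have hA := lemmaA hρ f a b c d (v := w i) hwpos r (rkS i)
      (fun j hj => hord j (Finset.mem_range.1 (hrange hj)))
      (fun j hj => hsub j (Finset.mem_range.1 (hrange hj)))
      (fun j hj j' hj' hne => hdisj j (Finset.mem_range.1 (hrange hj))
        j' (Finset.mem_range.1 (hrange hj')) hne)
      (fun j hj => hwge i j hj)
    -- divide by the rank
    have hnkpos : 0 < nk i := hnk1 i hik
    have hnne : ((nk i : ℕ) : ℝ≥0∞) ≠ 0 := by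
      simp only [ne_eq, Nat.cast_eq_zero]
      omega
    have hntop : ((nk i : ℕ) : ℝ≥0∞) ≠ ∞ := ENNReal.natCast_ne_top _
    have hsplit : ENNReal.ofReal ((nk i : ℝ) * w i ^ ρ)
        = ((nk i : ℕ) : ℝ≥0∞) * ENNReal.ofReal (w i ^ ρ) := by
      rw [ENNReal.ofReal_mul (Nat.cast_nonneg _), ENNReal.ofReal_natCast]
    rw [hsplit] at hA
    have hdiv : ENNReal.ofReal (w i ^ ρ)
        ≤ ENNReal.ofReal (CAdef ρ (nk i)) / ((nk i : ℕ) : ℝ≥0∞) * pVar2d ρ f a b c d ^ ρ := by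
      have h1 : ENNReal.ofReal (w i ^ ρ)
          = ((nk i : ℕ) : ℝ≥0∞) * ENNReal.ofReal (w i ^ ρ) / ((nk i : ℕ) : ℝ≥0∞) := by
        rw [mul_comm ((nk i : ℕ) : ℝ≥0∞) _, mul_div_assoc, ENNReal.div_self hnne hntop, mul_one]
      rw [h1]
      calc ((nk i : ℕ) : ℝ≥0∞) * ENNReal.ofReal (w i ^ ρ) / ((nk i : ℕ) : ℝ≥0∞)
          ≤ ENNReal.ofReal (CAdef ρ (nk i)) * pVar2d ρ f a b c d ^ ρ / ((nk i : ℕ) : ℝ≥0∞) :=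
            ENNReal.div_le_div_right hA _
        _ = ENNReal.ofReal (CAdef ρ (nk i)) / ((nk i : ℕ) : ℝ≥0∞) * pVar2d ρ f a b c d ^ ρ := by
            rw [ENNReal.div_eq_inv_mul, ENNReal.div_eq_inv_mul]
            ring
    -- raise to the power γ
    have hmono := ENNReal.rpow_le_rpow hdiv hγpos.le
    have hlhs : ENNReal.ofReal (w i ^ ρ) ^ γ = ENNReal.ofReal (w i ^ ρ') := by
      rw [ENNReal.ofReal_rpow_of_nonneg (Real.rpow_nonneg (abs_nonneg _) _) hγpos.le]
      congr 1
      rw [← Real.rpow_mul (abs_nonneg _), hργ]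
    have hrhs : (ENNReal.ofReal (CAdef ρ (nk i)) / ((nk i : ℕ) : ℝ≥0∞)
          * pVar2d ρ f a b c d ^ ρ) ^ γ
        = psi ρ ρ' (nk i - 1) * pVar2d ρ f a b c d ^ ρ' := by
      rw [ENNReal.mul_rpow_of_nonneg _ _ hγpos.le]
      congr 1
      · have hsucc : nk i - 1 + 1 = nk i := by omega
        rw [psi, hsucc]
      · rw [← ENNReal.rpow_mul, hργ]
    rw [hlhs, hrhs] at hmono
    exact hmono
  -- sum up
  rw [hsum1, ENNReal.ofReal_sum_of_nonneg (fun i _ => Real.rpow_nonneg (abs_nonneg _) _)]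
  have hstep : ∑ i ∈ P, ENNReal.ofReal (w i ^ ρ')
      ≤ (∑ i ∈ P, psi ρ ρ' (nk i - 1)) * pVar2d ρ f a b c d ^ ρ' := by
    rw [Finset.sum_mul]
    exact Finset.sum_le_sum hper
  refine le_trans hstep ?_
  have htail : ∑ i ∈ P, psi ρ ρ' (nk i - 1) ≤ ∑' n, psi ρ ρ' n + 1 := by
    have hinj : Set.InjOn (fun i => nk i - 1) ↑P := by
      intro i hi j hj hij
      simp only [Finset.mem_coe, hPdef, Finset.mem_filter] at hi hj
      simp only at hij
      by_contra hne
      have h1 := hnk1 i hi.1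
      have h2 := hnk1 j hj.1
      have := hnkinj i hi.1 j hj.1 hne
      omega
    have h1 : ∑ i ∈ P, psi ρ ρ' (nk i - 1) = ∑ m ∈ P.image (fun i => nk i - 1), psi ρ ρ' m :=
      (Finset.sum_image fun i hi j hj hij => hinj hi hj hij).symm
    rw [h1]
    refine le_trans (ENNReal.sum_le_tsum _) ?_
    exact le_self_add
  exact mul_le_mul_left htail _

lemma union_Icc (τ : ℕ → ℝ) (hmono : Monotone τ) {n : ℕ} (hn : 1 ≤ n) :
    ⋃ i ∈ Finset.range n, Set.Icc (τ i) (τ (i+1)) = Set.Icc (τ 0) (τ n) := by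
  induction n, hn using Nat.le_induction with
  | base => simp
  | succ n hn ih =>
      rw [Finset.range_add_one, Finset.set_biUnion_insert, ih, Set.union_comm,
        Set.Icc_union_Icc_eq_Icc (hmono (Nat.zero_le n)) (hmono (Nat.le_succ n))]

lemma grid_to_rect {p : ℝ} (hp : 0 < p) (f : ℝ → ℝ → ℝ) {a b c d : ℝ}
    {n m : ℕ} (hn : 1 ≤ n) (hm : 1 ≤ m) {τ σ : ℕ → ℝ}
    (hτ : IsPartitionOn a b n τ) (hσ : IsPartitionOn c d m σ) :
    IsRectPartition a b c d (n * m)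
      (fun t => (τ (t / m), τ (t / m + 1), σ (t % m), σ (t % m + 1))) ∧
    rectSum p f (n * m) (fun t => (τ (t / m), τ (t / m + 1), σ (t % m), σ (t % m + 1)))
      = gridSum p f n m τ σ := by
  obtain ⟨hτm, hτ0, hτn⟩ := hτ
  obtain ⟨hσm, hσ0, hσm'⟩ := hσ
  have hm0 : 0 < m := hm
  constructor
  · refine ⟨?_, ?_, ?_⟩
    · intro t _
      exact ⟨hτm (Nat.le_succ _), hσm (Nat.le_succ _)⟩
    · ext z
      simp only [Set.mem_iUnion, Finset.mem_range, exists_prop]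
      constructor
      · rintro ⟨t, ht, hz⟩
        obtain ⟨hz1, hz2⟩ := hz
        have hdiv : t / m + 1 ≤ n := by
          have : t / m < n := Nat.div_lt_of_lt_mul (by rw [Nat.mul_comm]; exact ht)
          omega
        have hmod : t % m + 1 ≤ m := by
          have := Nat.mod_lt t hm0
          omega
        constructor
        · rw [Set.mem_Icc] at hz1 ⊢
          constructor
          · calc a = τ 0 := hτ0.symm
              _ ≤ τ (t / m) := hτm (Nat.zero_le _)
              _ ≤ z.1 := hz1.1
          · calc z.1 ≤ τ (t / m + 1) := hz1.2
              _ ≤ τ n := hτm hdiv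
              _ = b := hτn
        · rw [Set.mem_Icc] at hz2 ⊢
          constructor
          · calc c = σ 0 := hσ0.symm
              _ ≤ σ (t % m) := hσm (Nat.zero_le _)
              _ ≤ z.2 := hz2.1
          · calc z.2 ≤ σ (t % m + 1) := hz2.2
              _ ≤ σ m := hσm hmod
              _ = d := hσm'
      · rintro ⟨hz1, hz2⟩
        have hx : z.1 ∈ ⋃ i ∈ Finset.range n, Set.Icc (τ i) (τ (i+1)) := by
          rw [union_Icc τ hτm hn, hτ0, hτn]
          exact hz1
        have hy : z.2 ∈ ⋃ j ∈ Finset.range m, Set.Icc (σ j) (σ (j+1)) := by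
          rw [union_Icc σ hσm hm, hσ0, hσm']
          exact hz2
        simp only [Set.mem_iUnion, Finset.mem_range, exists_prop] at hx hy
        obtain ⟨i, hi, hxi⟩ := hx
        obtain ⟨j, hj, hyj⟩ := hy
        refine ⟨m * i + j, ?_, ?_, ?_⟩
        · calc m * i + j < m * i + m := by omega
            _ = m * (i + 1) := by ring
            _ ≤ m * n := Nat.mul_le_mul_left _ (by omega)
            _ = n * m := Nat.mul_comm _ _
        · rw [Nat.mul_add_div hm0, Nat.div_eq_of_lt hj]
          simpa using hxi
        · rw [Nat.mul_add_mod, Nat.mod_eq_of_lt hj]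
          exact hyj
    · intro t ht u hu hne
      have hdec : t = m * (t / m) + t % m := (Nat.div_add_mod t m).symm
      have hdec' : u = m * (u / m) + u % m := (Nat.div_add_mod u m).symm
      have hne2 : t / m ≠ u / m ∨ t % m ≠ u % m := by
        by_contra hcon
        push_neg at hcon
        apply hne
        rw [hdec, hdec', hcon.1, hcon.2]
      rw [Set.disjoint_left]
      rintro z ⟨hz1, hz2⟩ ⟨hw1, hw2⟩
      rcases hne2 with h | h
      · rcases Nat.lt_or_ge (t / m) (u / m) with hlt | hge
        · have : τ (t / m + 1) ≤ τ (u / m) := hτm (by omega)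
          rw [Set.mem_Ioo] at hz1 hw1
          linarith [hz1.2, hw1.1]
        · have hlt : u / m < t / m := by omega
          have : τ (u / m + 1) ≤ τ (t / m) := hτm (by omega)
          rw [Set.mem_Ioo] at hz1 hw1
          linarith [hz1.1, hw1.2]
      · rcases Nat.lt_or_ge (t % m) (u % m) with hlt | hge
        · have : σ (t % m + 1) ≤ σ (u % m) := hσm (by omega)
          rw [Set.mem_Ioo] at hz2 hw2
          linarith [hz2.2, hw2.1]
        · have hlt : u % m < t % m := by omega
          have : σ (u % m + 1) ≤ σ (t % m) := hσm (by omega)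
          rw [Set.mem_Ioo] at hz2 hw2
          linarith [hz2.1, hw2.2]
  · rw [rectSum, gridSum, ← Finset.sum_product']
    apply Finset.sum_nbij' (i := fun t => (t / m, t % m)) (j := fun q => m * q.1 + q.2)
    · intro t ht
      rw [Finset.mem_range] at ht
      rw [Finset.mem_product, Finset.mem_range, Finset.mem_range]
      exact ⟨Nat.div_lt_of_lt_mul (by rw [Nat.mul_comm]; exact ht), Nat.mod_lt _ hm0⟩
    · intro q hq
      rw [Finset.mem_product, Finset.mem_range, Finset.mem_range] at hq
      rw [Finset.mem_range]
      calc m * q.1 + q.2 < m * q.1 + m := by omega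
        _ = m * (q.1 + 1) := by ring
        _ ≤ m * n := Nat.mul_le_mul_left _ (by omega)
        _ = n * m := Nat.mul_comm _ _
    · intro t _
      exact Nat.div_add_mod t m
    · intro q hq
      rw [Finset.mem_product, Finset.mem_range, Finset.mem_range] at hq
      have h1 : (m * q.1 + q.2) / m = q.1 := by
        rw [Nat.mul_add_div hm0, Nat.div_eq_of_lt hq.2]
        omega
      have h2 : (m * q.1 + q.2) % m = q.2 := by
        rw [Nat.mul_add_mod, Nat.mod_eq_of_lt hq.2]
      rw [Prod.ext_iff]
      exact ⟨h1, h2⟩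
    · intro t _
      rfl

lemma pVar2d_le_cVar2d {p : ℝ} (hp : 0 < p) (f : ℝ → ℝ → ℝ) {a b c d : ℝ} :
    pVar2d p f a b c d ≤ cVar2d p f a b c d := by
  rw [pVar2d_def]
  refine iSup_le fun n => iSup_le fun m => iSup_le fun τ => iSup_le fun σ =>
    iSup_le fun hτ => iSup_le fun hσ => ?_
  rcases Nat.eq_zero_or_pos n with rfl | hn
  · have h0 : gridSum p f 0 m τ σ = 0 := by rw [gridSum]; simp
    rw [h0, Real.zero_rpow (by positivity), ENNReal.ofReal_zero]
    exact zero_le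
  rcases Nat.eq_zero_or_pos m with rfl | hm
  · have h0 : gridSum p f n 0 τ σ = 0 := by
      rw [gridSum]
      simp
    rw [h0, Real.zero_rpow (by positivity), ENNReal.ofReal_zero]
    exact zero_le
  obtain ⟨hpart, hsum⟩ := grid_to_rect hp f hn hm hτ hσ
  have hle : ENNReal.ofReal ((rectSum p f (n*m)
      (fun t => (τ (t / m), τ (t / m + 1), σ (t % m), σ (t % m + 1)))) ^ (1/p))
      ≤ cVar2d p f a b c d := by
    rw [cVar2d_def]
    refine le_trans ?_ (le_iSup _ (n*m))
    refine le_trans ?_ (le_iSup _ (fun t => (τ (t / m), τ (t / m + 1), σ (t % m), σ (t % m + 1))))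
    exact le_iSup (fun _ : IsRectPartition a b c d (n*m)
      (fun t => (τ (t / m), τ (t / m + 1), σ (t % m), σ (t % m + 1))) =>
      ENNReal.ofReal ((rectSum p f (n*m)
        (fun t => (τ (t / m), τ (t / m + 1), σ (t % m), σ (t % m + 1)))) ^ (1/p))) hpart
  rwa [hsum] at hle

lemma pVar2d_mono {p : ℝ} (hp : 0 < p) (f : ℝ → ℝ → ℝ) {a b c d a' b' c' d' : ℝ}
    (ha : a' ≤ a) (hab : a ≤ b) (hb : b ≤ b') (hc : c' ≤ c) (hcd : c ≤ d) (hd : d ≤ d') :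
    pVar2d p f a b c d ≤ pVar2d p f a' b' c' d' := by
  rw [pVar2d_def, pVar2d_def]
  refine iSup_le fun n => iSup_le fun m => iSup_le fun τ => iSup_le fun σ =>
    iSup_le fun hτ => iSup_le fun hσ => ?_
  obtain ⟨hτm, hτ0, hτn⟩ := hτ
  obtain ⟨hσm, hσ0, hσm'⟩ := hσ
  set τ' : ℕ → ℝ := fun j => if j = 0 then a' else if j ≤ n + 1 then τ (min (j - 1) n) else b'
    with hτ'def
  set σ' : ℕ → ℝ := fun j => if j = 0 then c' else if j ≤ m + 1 then σ (min (j - 1) m) else d'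
    with hσ'def
  have hτrange : ∀ i, a ≤ τ (min i n) ∧ τ (min i n) ≤ b := by
    intro i
    constructor
    · rw [← hτ0]
      exact hτm (Nat.zero_le _)
    · rw [← hτn]
      exact hτm (min_le_right _ _)
  have hσrange : ∀ i, c ≤ σ (min i m) ∧ σ (min i m) ≤ d := by
    intro i
    constructor
    · rw [← hσ0]
      exact hσm (Nat.zero_le _)
    · rw [← hσm']
      exact hσm (min_le_right _ _)
  have hτ'mono : Monotone τ' := by
    intro j j' hj
    rw [hτ'def]
    simp only
    by_cases h0 : j = 0
    · rw [if_pos h0]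
      by_cases h0' : j' = 0
      · rw [if_pos h0']
      · rw [if_neg h0']
        by_cases h1' : j' ≤ n + 1
        · rw [if_pos h1']
          have := (hτrange (j' - 1)).1
          linarith
        · rw [if_neg h1']
          linarith
    · rw [if_neg h0]
      have h0' : ¬ j' = 0 := by omega
      rw [if_neg h0']
      by_cases h1 : j ≤ n + 1
      · rw [if_pos h1]
        by_cases h1' : j' ≤ n + 1
        · rw [if_pos h1']
          exact hτm (by omega)
        · rw [if_neg h1']
          have := (hτrange (j - 1)).2
          linarith
      · rw [if_neg h1, if_neg (show ¬ j' ≤ n + 1 by omega)]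
  have hσ'mono : Monotone σ' := by
    intro j j' hj
    rw [hσ'def]
    simp only
    by_cases h0 : j = 0
    · rw [if_pos h0]
      by_cases h0' : j' = 0
      · rw [if_pos h0']
      · rw [if_neg h0']
        by_cases h1' : j' ≤ m + 1
        · rw [if_pos h1']
          have := (hσrange (j' - 1)).1
          linarith
        · rw [if_neg h1']
          linarith
    · rw [if_neg h0]
      have h0' : ¬ j' = 0 := by omega
      rw [if_neg h0']
      by_cases h1 : j ≤ m + 1
      · rw [if_pos h1]
        by_cases h1' : j' ≤ m + 1
        · rw [if_pos h1']
          exact hσm (by omega)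
        · rw [if_neg h1']
          have := (hσrange (j - 1)).2
          linarith
      · rw [if_neg h1, if_neg (show ¬ j' ≤ m + 1 by omega)]
  have hτ'part : IsPartitionOn a' b' (n + 2) τ' := by
    refine ⟨hτ'mono, by rw [hτ'def]; simp, ?_⟩
    rw [hτ'def]
    simp only
    rw [if_neg (by omega), if_neg (by omega)]
  have hσ'part : IsPartitionOn c' d' (m + 2) σ' := by
    refine ⟨hσ'mono, by rw [hσ'def]; simp, ?_⟩
    rw [hσ'def]
    simp only
    rw [if_neg (by omega), if_neg (by omega)]
  have hsumle : gridSum p f n m τ σ ≤ gridSum p f (n + 2) (m + 2) τ' σ' := by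
    rw [gridSum, gridSum]
    have hterm : ∀ i ∈ Finset.range n, ∀ j ∈ Finset.range m,
        |rectIncr f (τ i) (τ (i+1)) (σ j) (σ (j+1))| ^ p
          = |rectIncr f (τ' (i+1)) (τ' (i+1+1)) (σ' (j+1)) (σ' (j+1+1))| ^ p := by
      intro i hi j hj
      rw [Finset.mem_range] at hi hj
      have e1 : τ' (i+1) = τ i := by
        rw [hτ'def]
        simp only
        rw [if_neg (by omega), if_pos (by omega)]
        congr 1
        omega
      have e2 : τ' (i+1+1) = τ (i+1) := by
        rw [hτ'def]
        simp only
        rw [if_neg (by omega), if_pos (by omega)]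
        congr 1
        omega
      have e3 : σ' (j+1) = σ j := by
        rw [hσ'def]
        simp only
        rw [if_neg (by omega), if_pos (by omega)]
        congr 1
        omega
      have e4 : σ' (j+1+1) = σ (j+1) := by
        rw [hσ'def]
        simp only
        rw [if_neg (by omega), if_pos (by omega)]
        congr 1
        omega
      rw [e1, e2, e3, e4]
    set H : ℕ × ℕ → ℝ := fun q => |rectIncr f (τ' q.1) (τ' (q.1+1)) (σ' q.2) (σ' (q.2+1))| ^ p
      with hHdef
    have hinj : Set.InjOn (fun q : ℕ × ℕ => (q.1+1, q.2+1))
        ↑(Finset.range n ×ˢ Finset.range m) := by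
      intro x _ y _ h
      simp only [Prod.mk.injEq] at h
      exact Prod.ext (by omega) (by omega)
    calc ∑ i ∈ Finset.range n, ∑ j ∈ Finset.range m,
          |rectIncr f (τ i) (τ (i+1)) (σ j) (σ (j+1))| ^ p
        = ∑ q ∈ Finset.range n ×ˢ Finset.range m, H (q.1+1, q.2+1) := by
          rw [← Finset.sum_product']
          refine Finset.sum_congr rfl fun q hq => ?_
          rw [Finset.mem_product] at hq
          rw [hHdef]
          exact hterm q.1 hq.1 q.2 hq.2
      _ = ∑ q ∈ (Finset.range n ×ˢ Finset.range m).image (fun q => (q.1+1, q.2+1)), H q :=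
          (Finset.sum_image fun x hx y hy h => hinj hx hy h).symm
      _ ≤ ∑ q ∈ Finset.range (n+2) ×ˢ Finset.range (m+2), H q := by
          refine Finset.sum_le_sum_of_subset_of_nonneg ?_ fun q _ _ => ?_
          · intro q hq
            rw [Finset.mem_image] at hq
            obtain ⟨x, hx, rfl⟩ := hq
            rw [Finset.mem_product] at hx ⊢
            rw [Finset.mem_range, Finset.mem_range] at hx ⊢
            simp only [Finset.mem_range]
            omega
          · rw [hHdef]
            exact Real.rpow_nonneg (abs_nonneg _) _
      _ = ∑ i ∈ Finset.range (n+2), ∑ j ∈ Finset.range (m+2),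
          |rectIncr f (τ' i) (τ' (i+1)) (σ' j) (σ' (j+1))| ^ p := by
          rw [← Finset.sum_product']
  refine le_trans (le_of_eq rfl) ?_
  refine le_trans ?_ (le_iSup _ (n+2))
  refine le_trans ?_ (le_iSup _ (m+2))
  refine le_trans ?_ (le_iSup _ τ')
  refine le_trans ?_ (le_iSup _ σ')
  refine le_trans ?_ (le_iSup _ hτ'part)
  refine le_trans ?_ (le_iSup (fun _ : IsPartitionOn c' d' (m+2) σ' =>
    ENNReal.ofReal ((gridSum p f (n+2) (m+2) τ' σ') ^ (1/p))) hσ'part)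
  apply ENNReal.ofReal_le_ofReal
  exact Real.rpow_le_rpow (gridSum_nonneg _ _ _ _ _ _) hsumle (by positivity)

lemma trivial_partition {x1 x2 y1 y2 : ℝ} (hx : x1 ≤ x2) (hy : y1 ≤ y2) :
    IsRectPartition x1 x2 y1 y2 1 (fun _ => (x1, x2, y1, y2)) := by
  refine ⟨fun i _ => ⟨hx, hy⟩, ?_, ?_⟩
  · simp
  · intro i hi j hj hne
    omega

lemma glue_partition (a b c d : ℝ) (k : ℕ) (r : ℕ → ℝ × ℝ × ℝ × ℝ)
    (hpart : IsRectPartition a b c d k r)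
    (ks : ℕ → ℕ) (rs : ℕ → ℕ → ℝ × ℝ × ℝ × ℝ)
    (hsub : ∀ i < k, IsRectPartition (r i).1 (r i).2.1 (r i).2.2.1 (r i).2.2.2 (ks i) (rs i)) :
    ∃ (K : ℕ) (R : ℕ → ℝ × ℝ × ℝ × ℝ), IsRectPartition a b c d K R ∧
      ∀ G : ℝ × ℝ × ℝ × ℝ → ℝ, ∑ t ∈ Finset.range K, G (R t)
        = ∑ i ∈ Finset.range k, ∑ t ∈ Finset.range (ks i), G (rs i t) := by
  classical
  obtain ⟨hord, hcov, hdisj⟩ := hpart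
  set off : ℕ → ℕ := fun i => ∑ j ∈ Finset.range i, ks j with hoffdef
  have hoffmono : Monotone off := fun i i' h =>
    Finset.sum_le_sum_of_subset (Finset.range_subset_range.2 h)
  have hoffsucc : ∀ i, off (i+1) = off i + ks i := fun i => Finset.sum_range_succ _ _
  set K := off k with hKdef
  set idx : ℕ → ℕ := fun t => Nat.findGreatest (fun i => off i ≤ t) k with hidxdef
  set R : ℕ → ℝ × ℝ × ℝ × ℝ := fun t => rs (idx t) (t - off (idx t)) with hRdef
  have hidx : ∀ i, i < k → ∀ t', t' < ks i → idx (off i + t') = i := by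
    intro i hik t' ht'
    have h1 : i ≤ idx (off i + t') :=
      Nat.le_findGreatest (P := fun j => off j ≤ off i + t') (by omega) (Nat.le_add_right _ _)
    have h2 : off (idx (off i + t')) ≤ off i + t' :=
      Nat.findGreatest_spec (P := fun j => off j ≤ off i + t') (m := i) (by omega)
        (Nat.le_add_right _ _)
    by_contra hne
    have h3 : i + 1 ≤ idx (off i + t') := by omega
    have h4 : off (i+1) ≤ off (idx (off i + t')) := hoffmono h3
    rw [hoffsucc] at h4
    omega
  have hRval : ∀ i, i < k → ∀ t', t' < ks i → R (off i + t') = rs i t' := by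
    intro i hik t' ht'
    rw [hRdef]
    simp only
    rw [hidx i hik t' ht']
    congr 1
    omega
  have hlocate : ∀ t, t < K → ∃ i, i < k ∧ ∃ t', t' < ks i ∧ t = off i + t' := by
    intro t ht
    have h0 : off 0 ≤ t := by
      rw [hoffdef]
      simp
    have hspec : off (idx t) ≤ t :=
      Nat.findGreatest_spec (P := fun i => off i ≤ t) (m := 0) (Nat.zero_le k) h0
    have hle : idx t ≤ k := Nat.findGreatest_le (P := fun i => off i ≤ t) k
    have hik : idx t < k := by
      rcases Nat.lt_or_ge (idx t) k with h | h
      · exact h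
      · exfalso
        have heq : idx t = k := by omega
        rw [heq] at hspec
        rw [hKdef] at ht
        omega
    have hlt : t < off (idx t + 1) := by
      by_contra h
      push_neg at h
      have hge := Nat.le_findGreatest (P := fun i => off i ≤ t) (n := k) (m := idx t + 1)
        (by omega) h
      have heq : Nat.findGreatest (fun i => off i ≤ t) k = idx t := rfl
      rw [heq] at hge
      omega
    refine ⟨idx t, hik, t - off (idx t), ?_, by omega⟩
    rw [hoffsucc] at hlt
    omega
  -- each small cell sits inside its rectangle
  have hopensub : ∀ i, i < k → ∀ t', t' < ks i →
      Set.Ioo (rs i t').1 (rs i t').2.1 ×ˢ Set.Ioo (rs i t').2.2.1 (rs i t').2.2.2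
        ⊆ Set.Ioo (r i).1 (r i).2.1 ×ˢ Set.Ioo (r i).2.2.1 (r i).2.2.2 := by
    intro i hik t' ht'
    obtain ⟨hord', hcov', _⟩ := hsub i hik
    have hcell : Set.Icc (rs i t').1 (rs i t').2.1 ×ˢ Set.Icc (rs i t').2.2.1 (rs i t').2.2.2
        ⊆ Set.Icc (r i).1 (r i).2.1 ×ˢ Set.Icc (r i).2.2.1 (r i).2.2.2 := by
      rw [← hcov']
      intro z hz
      simp only [Set.mem_iUnion, Finset.mem_range, exists_prop]
      exact ⟨t', ht', hz⟩
    obtain ⟨ho1, ho2⟩ := hord' t' ht'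
    rw [Set.prod_subset_prod_iff] at hcell
    rcases hcell with ⟨h1, h2⟩ | h | h
    · obtain ⟨ha1, hb1⟩ := (Set.Icc_subset_Icc_iff ho1).1 h1
      obtain ⟨ha2, hb2⟩ := (Set.Icc_subset_Icc_iff ho2).1 h2
      exact Set.prod_mono (Set.Ioo_subset_Ioo ha1 hb1) (Set.Ioo_subset_Ioo ha2 hb2)
    · exact absurd h (Set.nonempty_Icc.2 ho1).ne_empty
    · exact absurd h (Set.nonempty_Icc.2 ho2).ne_empty
  have hcellsub : ∀ i, i < k → ∀ t', t' < ks i →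
      Set.Icc (rs i t').1 (rs i t').2.1 ×ˢ Set.Icc (rs i t').2.2.1 (rs i t').2.2.2
        ⊆ Set.Icc a b ×ˢ Set.Icc c d := by
    intro i hik t' ht'
    obtain ⟨_, hcov', _⟩ := hsub i hik
    intro z hz
    have h1 : z ∈ ⋃ t' ∈ Finset.range (ks i),
        Set.Icc (rs i t').1 (rs i t').2.1 ×ˢ Set.Icc (rs i t').2.2.1 (rs i t').2.2.2 := by
      simp only [Set.mem_iUnion, Finset.mem_range, exists_prop]
      exact ⟨t', ht', hz⟩
    rw [hcov'] at h1
    have h2 : z ∈ ⋃ i ∈ Finset.range k,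
        Set.Icc (r i).1 (r i).2.1 ×ˢ Set.Icc (r i).2.2.1 (r i).2.2.2 := by
      simp only [Set.mem_iUnion, Finset.mem_range, exists_prop]
      exact ⟨i, hik, h1⟩
    rw [hcov] at h2
    exact h2
  refine ⟨K, R, ⟨?_, ?_, ?_⟩, ?_⟩
  · -- ordered
    intro t ht
    obtain ⟨i, hik, t', ht', rfl⟩ := hlocate t ht
    rw [hRval i hik t' ht']
    exact (hsub i hik).1 t' ht'
  · -- covering
    ext z
    simp only [Set.mem_iUnion, Finset.mem_range, exists_prop]
    constructor
    · rintro ⟨t, ht, hz⟩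
      obtain ⟨i, hik, t', ht', rfl⟩ := hlocate t ht
      rw [hRval i hik t' ht'] at hz
      have := hcellsub i hik t' ht' hz
      rwa [Set.mem_prod] at this
    · rintro hz
      have hz' : z ∈ ⋃ i ∈ Finset.range k,
          Set.Icc (r i).1 (r i).2.1 ×ˢ Set.Icc (r i).2.2.1 (r i).2.2.2 := by
        rw [hcov]
        exact hz
      simp only [Set.mem_iUnion, Finset.mem_range, exists_prop] at hz'
      obtain ⟨i, hik, hzi⟩ := hz'
      obtain ⟨_, hcov', _⟩ := hsub i hik
      have hz'' : z ∈ ⋃ t' ∈ Finset.range (ks i),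
          Set.Icc (rs i t').1 (rs i t').2.1 ×ˢ Set.Icc (rs i t').2.2.1 (rs i t').2.2.2 := by
        rw [hcov']
        exact hzi
      simp only [Set.mem_iUnion, Finset.mem_range, exists_prop] at hz''
      obtain ⟨t', ht', hzc⟩ := hz''
      refine ⟨off i + t', ?_, ?_⟩
      · calc off i + t' < off i + ks i := by omega
          _ = off (i+1) := (hoffsucc i).symm
          _ ≤ off k := hoffmono (by omega)
      · rw [hRval i hik t' ht']
        exact hzc
  · -- disjoint
    intro t ht u hu hne
    obtain ⟨i, hik, t', ht', rfl⟩ := hlocate t ht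
    obtain ⟨i2, hik2, u', hu', rfl⟩ := hlocate u hu
    rw [hRval i hik t' ht', hRval i2 hik2 u' hu']
    by_cases hii : i = i2
    · subst hii
      have htu : t' ≠ u' := by
        intro h
        apply hne
        rw [h]
      exact (hsub i hik).2.2 t' ht' u' hu' htu
    · exact Disjoint.mono (hopensub i hik t' ht') (hopensub i2 hik2 u' hu')
        ((hdisj i hik i2 hik2 hii))
  · -- the sum identity
    intro G
    have hsumaux : ∀ j, j ≤ k → ∑ t ∈ Finset.range (off j), G (R t)
        = ∑ i ∈ Finset.range j, ∑ t' ∈ Finset.range (ks i), G (rs i t') := by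
      intro j hj
      induction j with
      | zero => simp [hoffdef]
      | succ j ih =>
          rw [hoffsucc, Finset.sum_range_add, ih (by omega), Finset.sum_range_succ]
          congr 1
          refine Finset.sum_congr rfl fun t' ht' => ?_
          rw [Finset.mem_range] at ht'
          rw [hRval j (by omega) t' ht']
    exact hsumaux k le_rfl

/-- superadditivity of `cVar2d ^ p` over rectangular partitions -/
lemma cVar2d_superadd {p : ℝ} (hp : 0 < p) (f : ℝ → ℝ → ℝ) (a b c d : ℝ)
    (k : ℕ) (r : ℕ → ℝ × ℝ × ℝ × ℝ) (hpart : IsRectPartition a b c d k r) :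
    ∑ i ∈ Finset.range k, cVar2d p f (r i).1 (r i).2.1 (r i).2.2.1 (r i).2.2.2 ^ p
      ≤ cVar2d p f a b c d ^ p := by
  classical
  set ι : Type := ℕ × (ℕ → ℝ × ℝ × ℝ × ℝ) with hιdef
  have : Nonempty ι := ⟨⟨0, fun _ => (0,0,0,0)⟩⟩
  set g : ℕ → ι → ℝ≥0∞ := fun i pr =>
    if IsRectPartition (r i).1 (r i).2.1 (r i).2.2.1 (r i).2.2.2 pr.1 pr.2
    then ENNReal.ofReal (rectSum p f pr.1 pr.2) else 0 with hgdef
  have hstep1 : ∀ i ∈ Finset.range k,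
      cVar2d p f (r i).1 (r i).2.1 (r i).2.2.1 (r i).2.2.2 ^ p = ⨆ x : ι, g i x := by
    intro i _
    rw [cVar2d_pow p hp]
    apply le_antisymm
    · refine iSup_le fun k' => iSup_le fun r' => iSup_le fun hr' => ?_
      refine le_trans (le_of_eq ?_) (le_iSup _ ((k', r') : ι))
      rw [hgdef]
      simp only [if_pos hr']
    · refine iSup_le fun pr => ?_
      rw [hgdef]
      simp only
      by_cases hpr : IsRectPartition (r i).1 (r i).2.1 (r i).2.2.1 (r i).2.2.2 pr.1 pr.2
      · rw [if_pos hpr]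
        refine le_trans ?_ (le_iSup _ pr.1)
        refine le_trans ?_ (le_iSup _ pr.2)
        exact le_iSup (fun _ : IsRectPartition (r i).1 (r i).2.1 (r i).2.2.1 (r i).2.2.2
          pr.1 pr.2 => ENNReal.ofReal (rectSum p f pr.1 pr.2)) hpr
      · rw [if_neg hpr]
        exact zero_le
  rw [Finset.sum_congr rfl hstep1, sum_iSup]
  refine iSup_le fun csel => ?_
  -- replace invalid choices by the trivial partition
  set csel' : ℕ → ι := fun i =>
    if IsRectPartition (r i).1 (r i).2.1 (r i).2.2.1 (r i).2.2.2 (csel i).1 (csel i).2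
    then csel i else (1, fun _ => r i) with hc'def
  have hvalid : ∀ i < k, IsRectPartition (r i).1 (r i).2.1 (r i).2.2.1 (r i).2.2.2
      (csel' i).1 (csel' i).2 := by
    intro i hik
    rw [hc'def]
    simp only
    by_cases h : IsRectPartition (r i).1 (r i).2.1 (r i).2.2.1 (r i).2.2.2 (csel i).1 (csel i).2
    · rw [if_pos h]
      exact h
    · rw [if_neg h]
      have := hpart.1 i hik
      have ht := trivial_partition this.1 this.2
      convert ht using 2
  have hgle : ∀ i < k, g i (csel i) ≤ ENNReal.ofReal (rectSum p f (csel' i).1 (csel' i).2) := by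
    intro i hik
    rw [hgdef, hc'def]
    simp only
    by_cases h : IsRectPartition (r i).1 (r i).2.1 (r i).2.2.1 (r i).2.2.2 (csel i).1 (csel i).2
    · rw [if_pos h, if_pos h]
    · rw [if_neg h, if_neg h]
      exact zero_le
  obtain ⟨K, R, hKpart, hKsum⟩ := glue_partition a b c d k r hpart
    (fun i => (csel' i).1) (fun i => (csel' i).2) hvalid
  calc ∑ i ∈ Finset.range k, g i (csel i)
      ≤ ∑ i ∈ Finset.range k, ENNReal.ofReal (rectSum p f (csel' i).1 (csel' i).2) := by
        refine Finset.sum_le_sum fun i hi => hgle i (Finset.mem_range.1 hi)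
    _ = ENNReal.ofReal (rectSum p f K R) := by
        rw [rectSum, hKsum (fun q => |rectIncr f q.1 q.2.1 q.2.2.1 q.2.2.2| ^ p)]
        rw [ENNReal.ofReal_sum_of_nonneg]
        · refine Finset.sum_congr rfl fun i _ => ?_
          rw [rectSum, ENNReal.ofReal_sum_of_nonneg]
          intro j _
          exact Real.rpow_nonneg (abs_nonneg _) _
        · intro i _
          exact Finset.sum_nonneg fun j _ => Real.rpow_nonneg (abs_nonneg _) _
    _ ≤ cVar2d p f a b c d ^ p := le_cVar2d_pow hp hKpart

end FVaux

/-- **Friz–Victoir comparison of 2d variation and controlled 2d variation.**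
For `ρ' > ρ ≥ 1` and continuous `f` of finite 2d `ρ`-variation:
`C_{ρ,ρ'} ⦀f⦀_{ρ'-var} ≤ ‖f‖_{ρ-var} ≤ ⦀f⦀_{ρ-var}`, the controlled `ρ'`-variation is
finite, `‖f‖_{ρ'-var}^{ρ'} ≤ ω := ⦀f⦀_{ρ'-var}^{ρ'}`, and `ω` is a superadditive 2d
control (superadditive over rectangular partitions). -/
theorem controlled_variation_comparison
    (ρ ρ' : ℝ) (hρ : 1 ≤ ρ) (hρρ' : ρ < ρ') :
    ∃ C : ℝ, 0 < C ∧
      ∀ (T : ℝ) (f : ℝ → ℝ → ℝ),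
        ContinuousOn (fun z : ℝ × ℝ => f z.1 z.2) (Set.Icc 0 T ×ˢ Set.Icc 0 T) →
        pVar2d ρ f 0 T 0 T ≠ ∞ →
        (∀ s₁ s₂ t₁ t₂ : ℝ, 0 ≤ s₁ → s₁ ≤ s₂ → s₂ ≤ T → 0 ≤ t₁ → t₁ ≤ t₂ → t₂ ≤ T →
          cVar2d ρ' f s₁ s₂ t₁ t₂ ≠ ∞ ∧
          ENNReal.ofReal C * cVar2d ρ' f s₁ s₂ t₁ t₂ ≤ pVar2d ρ f s₁ s₂ t₁ t₂ ∧
          pVar2d ρ f s₁ s₂ t₁ t₂ ≤ cVar2d ρ f s₁ s₂ t₁ t₂ ∧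
          pVar2d ρ' f s₁ s₂ t₁ t₂ ^ ρ' ≤ cVar2d ρ' f s₁ s₂ t₁ t₂ ^ ρ') ∧
        (∀ a b c d : ℝ, 0 ≤ a → a ≤ b → b ≤ T → 0 ≤ c → c ≤ d → d ≤ T →
          ∀ (k : ℕ) (r : ℕ → ℝ × ℝ × ℝ × ℝ), IsRectPartition a b c d k r →
            ∑ i ∈ Finset.range k,
                cVar2d ρ' f (r i).1 (r i).2.1 (r i).2.2.1 (r i).2.2.2 ^ ρ'
              ≤ cVar2d ρ' f a b c d ^ ρ') := by
  classical
  have hρ0 : (0:ℝ) < ρ := by linarith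
  have hρ'0 : (0:ℝ) < ρ' := by linarith
  obtain ⟨K, hK0, hKtop, hKbound⟩ := FVaux.master hρ hρρ'
  set c₀ : ℝ≥0∞ := K ^ (1/ρ') with hc₀def
  have hc₀0 : c₀ ≠ 0 := by
    rw [hc₀def]
    intro h
    rw [ENNReal.rpow_eq_zero_iff] at h
    rcases h with ⟨h1, _⟩ | ⟨h1, h2⟩
    · exact hK0 h1
    · have : (0:ℝ) < 1/ρ' := by
        rw [one_div]
        exact inv_pos.2 hρ'0
      linarith
  have hc₀top : c₀ ≠ ∞ := by
    rw [hc₀def]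
    exact ENNReal.rpow_ne_top_of_nonneg (by rw [one_div]; exact (inv_pos.2 hρ'0).le) hKtop
  refine ⟨(c₀⁻¹).toReal, ?_, ?_⟩
  · apply ENNReal.toReal_pos
    · rw [ne_eq, ENNReal.inv_eq_zero]
      exact hc₀top
    · rw [ne_eq, ENNReal.inv_eq_top]
      exact hc₀0
  intro T f _ hfin
  have hkey : ∀ s₁ s₂ t₁ t₂ : ℝ,
      cVar2d ρ' f s₁ s₂ t₁ t₂ ≤ c₀ * pVar2d ρ f s₁ s₂ t₁ t₂ := by
    intro s₁ s₂ t₁ t₂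
    have hpow : cVar2d ρ' f s₁ s₂ t₁ t₂ ^ ρ' ≤ K * pVar2d ρ f s₁ s₂ t₁ t₂ ^ ρ' := by
      apply FVaux.cVar2d_pow_le hρ'0
      intro k r hr
      obtain ⟨hord, hcov, hdisj⟩ := hr
      apply hKbound f s₁ s₂ t₁ t₂ k r hord ?_ hdisj
      intro i hik
      rw [← hcov]
      intro z hz
      simp only [Set.mem_iUnion, Finset.mem_range, exists_prop]
      exact ⟨i, hik, hz⟩
    have hroot := ENNReal.rpow_le_rpow hpow
      (show (0:ℝ) ≤ 1/ρ' by rw [one_div]; exact (inv_pos.2 hρ'0).le)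
    rw [FVaux.rpow_rpow_inv hρ'0.ne'] at hroot
    refine le_trans hroot (le_of_eq ?_)
    rw [ENNReal.mul_rpow_of_nonneg _ _
        (show (0:ℝ) ≤ 1/ρ' by rw [one_div]; exact (inv_pos.2 hρ'0).le),
      FVaux.rpow_rpow_inv hρ'0.ne', hc₀def]
  constructor
  · intro s₁ s₂ t₁ t₂ h0s hs hsT h0t ht htT
    have hmono : pVar2d ρ f s₁ s₂ t₁ t₂ ≤ pVar2d ρ f 0 T 0 T :=
      FVaux.pVar2d_mono hρ0 f h0s hs hsT h0t ht htT
    refine ⟨?_, ?_, ?_, ?_⟩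
    · have h2 : c₀ * pVar2d ρ f s₁ s₂ t₁ t₂ ≠ ∞ :=
        ENNReal.mul_ne_top hc₀top (ne_top_of_le_ne_top hfin hmono)
      exact ne_top_of_le_ne_top h2 (hkey s₁ s₂ t₁ t₂)
    · have hC : ENNReal.ofReal (c₀⁻¹).toReal = c₀⁻¹ := ENNReal.ofReal_toReal (by
        rw [ne_eq, ENNReal.inv_eq_top]
        exact hc₀0)
      rw [hC]
      calc c₀⁻¹ * cVar2d ρ' f s₁ s₂ t₁ t₂ ≤ c₀⁻¹ * (c₀ * pVar2d ρ f s₁ s₂ t₁ t₂) :=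
            mul_le_mul_right (hkey s₁ s₂ t₁ t₂) _
        _ = (c₀⁻¹ * c₀) * pVar2d ρ f s₁ s₂ t₁ t₂ := by rw [mul_assoc]
        _ = pVar2d ρ f s₁ s₂ t₁ t₂ := by rw [ENNReal.inv_mul_cancel hc₀0 hc₀top, one_mul]
    · exact FVaux.pVar2d_le_cVar2d hρ0 f
    · exact ENNReal.rpow_le_rpow (FVaux.pVar2d_le_cVar2d hρ'0 f) hρ'0.le
  · intro a b c d _ _ _ _ _ _ k r hpart
    exact FVaux.cVar2d_superadd hρ'0 f a b c d k r hpart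
end

section
/- Let x be a real centered Gaussian process with covariance R satisfying, for some ρ ∈ [1,2) and constant C: ‖R‖_{ρ'-var;[a,b]×[c,d]}^{2ρ'} ≤ C(b−a)(d−c) for some ρ' ∈ (ρ,2), and let ω be a superadditive 2d control with ‖R‖_{ρ'-var;A}^{ρ'} ≤ ω(A) for all rectangles A and ω([s,t]²) ≤ C(t−s). Then for the uniform partition tₖ = kT/n and partition points s = t_{m₁} < t = t_{m₂}, Σ_{k,l=m₁}^{m₂−1} ‖R‖_{ρ'-var;[t_k,t_{k+1}]×[t_l,t_{l+1}]}^{ρ'} ≤ ω([s,t]²) ≤ C(t−s), and consequently Σ_{k,l} ‖R‖_{ρ'-var;[t_k,t_{k+1}]×[t_l,t_{l+1}]}² ≤ C' (T/n)^{2/ρ'−1} (t−s), where C' depends on ρ, ρ', T, C. -/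
open MeasureTheory ProbabilityTheory Finset Set
open scoped ENNReal NNReal

def IsCenteredGaussianProcess {Ω : Type*} [MeasurableSpace Ω] (P : Measure Ω)
    (x : ℝ → Ω → ℝ) (T : ℝ) : Prop :=
  ∀ (m : ℕ) (c : Fin m → ℝ) (u : Fin m → ℝ), (∀ i, u i ∈ Set.Icc (0 : ℝ) T) →
    ∃ v : ℝ≥0, P.map (fun ω => ∑ i, c i * x (u i) ω) = gaussianReal 0 v

noncomputable def extPart (a' b' : ℝ) (n : ℕ) (τ : ℕ → ℝ) : ℕ → ℝ :=
  fun i => if i = 0 then a' else if i ≤ n + 1 then τ (i - 1) else b'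

lemma extPart_succ (a' b' : ℝ) (n : ℕ) (τ : ℕ → ℝ) {i : ℕ} (h : i ≤ n) :
    extPart a' b' n τ (i + 1) = τ i := by
  simp [extPart, Nat.succ_le_succ h]

lemma isPartitionOn_extPart {a b a' b' : ℝ} {n : ℕ} {τ : ℕ → ℝ}
    (h : IsPartitionOn a b n τ) (ha : a' ≤ a) (hb : b ≤ b') :
    IsPartitionOn a' b' (n + 2) (extPart a' b' n τ) := by
  obtain ⟨hmono, h0, hn⟩ := h
  refine ⟨monotone_nat_of_le_succ fun i => ?_, by simp [extPart], by simp [extPart]⟩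
  match i with
  | 0 =>
    have : extPart a' b' n τ 1 = τ 0 := extPart_succ _ _ _ _ (Nat.zero_le n)
    simp [extPart, this, h0, ha]
  | (j+1) =>
    by_cases h1 : j + 1 ≤ n
    · rw [extPart_succ _ _ _ _ (Nat.le_of_succ_le h1), extPart_succ _ _ _ _ h1]
      exact hmono (Nat.le_succ j)
    · by_cases h2 : j ≤ n
      · rw [extPart_succ _ _ _ _ h2]
        have : extPart a' b' n τ (j + 2) = b' := by
          simp only [extPart, if_neg (Nat.succ_ne_zero _)]
          rw [if_neg (by omega)]
        rw [this]
        calc τ j ≤ τ n := hmono h2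
        _ = b := hn
        _ ≤ b' := hb
      · have e1 : extPart a' b' n τ (j + 1) = b' := by
          simp only [extPart, if_neg (Nat.succ_ne_zero _)]
          rw [if_neg (by omega)]
        have e2 : extPart a' b' n τ (j + 2) = b' := by
          simp only [extPart, if_neg (Nat.succ_ne_zero _)]
          rw [if_neg (by omega)]
        rw [e1, e2]

lemma pVar2d_mono {p : ℝ} (hp : 0 < p) (R : ℝ → ℝ → ℝ) {a b c d a' b' c' d' : ℝ}
    (ha : a' ≤ a) (hb : b ≤ b') (hc : c' ≤ c) (hd : d ≤ d') :
    pVar2d p R a b c d ≤ pVar2d p R a' b' c' d' := by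
  rw [pVar2d]
  refine iSup_le fun n => iSup_le fun m => iSup_le fun τ => iSup_le fun σ =>
    iSup_le fun hτ => iSup_le fun hσ => ?_
  have hτ' := isPartitionOn_extPart hτ ha hb
  have hσ' := isPartitionOn_extPart hσ hc hd
  set τ' := extPart a' b' n τ with hτ'def
  set σ' := extPart c' d' m σ with hσ'def
  have hsum : (∑ i ∈ Finset.range n, ∑ j ∈ Finset.range m,
      |rectIncr R (τ i) (τ (i + 1)) (σ j) (σ (j + 1))| ^ p)
      ≤ ∑ i ∈ Finset.range (n + 2), ∑ j ∈ Finset.range (m + 2),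
      |rectIncr R (τ' i) (τ' (i + 1)) (σ' j) (σ' (j + 1))| ^ p := by
    set F : ℕ × ℕ → ℝ := fun q =>
      |rectIncr R (τ' q.1) (τ' (q.1 + 1)) (σ' q.2) (σ' (q.2 + 1))| ^ p with hF
    have e1 : (∑ i ∈ Finset.range n, ∑ j ∈ Finset.range m,
        |rectIncr R (τ i) (τ (i + 1)) (σ j) (σ (j + 1))| ^ p)
        = ∑ q ∈ Finset.range n ×ˢ Finset.range m, F (q.1 + 1, q.2 + 1) := by
      rw [Finset.sum_product]
      refine Finset.sum_congr rfl fun i hi => Finset.sum_congr rfl fun j hj => ?_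
      simp only [hF, hτ'def, hσ'def]
      rw [extPart_succ _ _ _ _ (le_of_lt (Finset.mem_range.mp hi)),
        extPart_succ _ _ _ _ (Finset.mem_range.mp hi),
        extPart_succ _ _ _ _ (le_of_lt (Finset.mem_range.mp hj)),
        extPart_succ _ _ _ _ (Finset.mem_range.mp hj)]
    have e2 : (∑ q ∈ Finset.range n ×ˢ Finset.range m, F (q.1 + 1, q.2 + 1))
        = ∑ q ∈ (Finset.range n ×ˢ Finset.range m).image
            (fun q : ℕ × ℕ => (q.1 + 1, q.2 + 1)), F q := by
      rw [Finset.sum_image]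
      intro q _ q' _ h
      simpa [Prod.ext_iff] using h
    rw [e1, e2, ← Finset.sum_product' (s := Finset.range (n+2)) (t := Finset.range (m+2))
      (f := fun i j => F (i, j))]
    · refine Finset.sum_le_sum_of_subset_of_nonneg ?_ fun q _ _ => ?_
      · intro q hq
        simp only [Finset.mem_image, Finset.mem_product, Finset.mem_range] at hq ⊢
        obtain ⟨q', ⟨h1, h2⟩, rfl⟩ := hq
        omega
      · exact Real.rpow_nonneg (abs_nonneg _) p
  calc ENNReal.ofReal ((∑ i ∈ Finset.range n, ∑ j ∈ Finset.range m,
      |rectIncr R (τ i) (τ (i + 1)) (σ j) (σ (j + 1))| ^ p) ^ (1 / p))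
      ≤ ENNReal.ofReal ((∑ i ∈ Finset.range (n+2), ∑ j ∈ Finset.range (m+2),
      |rectIncr R (τ' i) (τ' (i + 1)) (σ' j) (σ' (j + 1))| ^ p) ^ (1 / p)) := by
        refine ENNReal.ofReal_le_ofReal (Real.rpow_le_rpow ?_ hsum (by positivity))
        exact Finset.sum_nonneg fun i _ => Finset.sum_nonneg fun j _ =>
          Real.rpow_nonneg (abs_nonneg _) p
  _ ≤ pVar2d p R a' b' c' d' := by
      rw [pVar2d]
      exact le_iSup_of_le (n+2) (le_iSup_of_le (m+2) (le_iSup_of_le τ'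
        (le_iSup_of_le σ' (le_iSup_of_le hτ' (le_iSup_of_le hσ' le_rfl)))))

def nxt (A : Finset ℕ) (M k : ℕ) : ℕ :=
  (insert M (A.filter fun j => k < j)).min' (Finset.insert_nonempty _ _)

def strt (A : Finset ℕ) (m : ℕ) (k : ℕ) : ℕ :=
  if (A.filter fun j => j < k).Nonempty then k else m

lemma lt_nxt {A : Finset ℕ} {m M k : ℕ} (hA : A ⊆ Finset.Ico m M) (hk : k ∈ A) :
    k < nxt A M k := by
  rw [nxt, Finset.lt_min'_iff]
  intro y hy
  rcases Finset.mem_insert.mp hy with rfl | hy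
  · exact (Finset.mem_Ico.mp (hA hk)).2
  · exact (Finset.mem_filter.mp hy).2

lemma nxt_le_M (A : Finset ℕ) (M k : ℕ) : nxt A M k ≤ M :=
  Finset.min'_le _ _ (Finset.mem_insert_self _ _)

lemma nxt_le {A : Finset ℕ} {M k j : ℕ} (hj : j ∈ A) (hkj : k < j) : nxt A M k ≤ j :=
  Finset.min'_le _ _ (Finset.mem_insert_of_mem (Finset.mem_filter.mpr ⟨hj, hkj⟩))

lemma m_le_strt {A : Finset ℕ} {m k : ℕ} (hk : m ≤ k) : m ≤ strt A m k := by
  rw [strt]; split <;> omega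

lemma strt_le {A : Finset ℕ} {m k : ℕ} (hk : m ≤ k) : strt A m k ≤ k := by
  rw [strt]; split <;> omega

lemma strt_eq_of_lt {A : Finset ℕ} {m k j : ℕ} (hj : j ∈ A) (hjk : j < k) :
    strt A m k = k := by
  rw [strt, if_pos ⟨j, Finset.mem_filter.mpr ⟨hj, hjk⟩⟩]

lemma cover1d {g : ℕ → ℝ} (hg : Monotone g) {A : Finset ℕ} {m M : ℕ}
    (hA : A ⊆ Finset.Ico m M) (hne : A.Nonempty) {u : ℝ}
    (h1 : g m ≤ u) (h2 : u ≤ g M) :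
    ∃ k ∈ A, g (strt A m k) ≤ u ∧ u ≤ g (nxt A M k) := by
  by_cases hF : (A.filter fun j => g j ≤ u).Nonempty
  · set k := (A.filter fun j => g j ≤ u).max' hF with hk
    have hkmem := Finset.max'_mem _ hF
    rw [← hk] at hkmem
    have hkA : k ∈ A := (Finset.mem_filter.mp hkmem).1
    have hku : g k ≤ u := (Finset.mem_filter.mp hkmem).2
    refine ⟨k, hkA, ?_, ?_⟩
    · exact le_trans (hg (strt_le (Finset.mem_Ico.mp (hA hkA)).1)) hku
    · by_contra hcon
      push_neg at hcon
      have hmem : nxt A M k ∈ insert M (A.filter fun j => k < j) :=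
        Finset.min'_mem _ _
      rcases Finset.mem_insert.mp hmem with he | he
      · exact absurd h2 (by rw [← he]; exact not_le.mpr hcon)
      · obtain ⟨hA', hk'⟩ := Finset.mem_filter.mp he
        have h4 : nxt A M k ∈ A.filter fun j => g j ≤ u :=
          Finset.mem_filter.mpr ⟨hA', le_of_lt hcon⟩
        have h5 := Finset.le_max' _ _ h4
        rw [← hk] at h5
        omega
  · have hkmin : ∀ j ∈ A, ¬ j < A.min' hne := fun j hj =>
      not_lt.mpr (Finset.min'_le _ _ hj)
    refine ⟨A.min' hne, Finset.min'_mem _ _, ?_, ?_⟩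
    · have : strt A m (A.min' hne) = m := by
        rw [strt, if_neg]
        intro h
        obtain ⟨j, hj⟩ := h
        exact hkmin j (Finset.mem_filter.mp hj).1 (Finset.mem_filter.mp hj).2
      rw [this]; exact h1
    · have hmin : A.min' hne ∈ A := Finset.min'_mem _ _
      have h3 : u < g (A.min' hne) := by
        by_contra hcon
        push_neg at hcon
        exact hF ⟨A.min' hne, Finset.mem_filter.mpr ⟨hmin, hcon⟩⟩
      exact le_of_lt (lt_of_lt_of_le h3 (hg (le_of_lt (lt_nxt hA hmin))))

lemma disj1d_lt {g : ℕ → ℝ} (hg : Monotone g) {A : Finset ℕ} {m M j k : ℕ}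
    (hj : j ∈ A) (hk : k ∈ A) (hjk : j < k) :
    Disjoint (Set.Ioo (g (strt A m j)) (g (nxt A M j)))
      (Set.Ioo (g (strt A m k)) (g (nxt A M k))) := by
  have h1 : Set.Ioo (g (strt A m j)) (g (nxt A M j)) ⊆ Set.Iic (g k) :=
    fun y hy => le_of_lt (lt_of_lt_of_le hy.2 (hg (nxt_le hk hjk)))
  have h2 : Set.Ioo (g (strt A m k)) (g (nxt A M k)) ⊆ Set.Ioi (g k) := by
    rw [strt_eq_of_lt hj hjk]
    exact fun y hy => hy.1
  exact (Set.Iic_disjoint_Ioi le_rfl).mono h1 h2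

lemma disj1d {g : ℕ → ℝ} (hg : Monotone g) {A : Finset ℕ} {m M j k : ℕ}
    (hj : j ∈ A) (hk : k ∈ A) (hjk : j ≠ k) :
    Disjoint (Set.Ioo (g (strt A m j)) (g (nxt A M j)))
      (Set.Ioo (g (strt A m k)) (g (nxt A M k))) := by
  rcases lt_or_gt_of_ne hjk with h | h
  · exact disj1d_lt hg hj hk h
  · exact (disj1d_lt hg hk hj h).symm

lemma key_sum_le (T ρ' : ℝ) (hρ'0 : 0 < ρ') (hT : 0 < T)
    (R : ℝ → ℝ → ℝ) (w : ℝ → ℝ → ℝ → ℝ → ℝ)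
    (hsup : ∀ a b c d : ℝ, 0 ≤ a → a ≤ b → b ≤ T → 0 ≤ c → c ≤ d → d ≤ T →
      ∀ (k : ℕ) (r : ℕ → ℝ × ℝ × ℝ × ℝ), IsRectPartition a b c d k r →
        ∑ i ∈ Finset.range k, w (r i).1 (r i).2.1 (r i).2.2.1 (r i).2.2.2
          ≤ w a b c d)
    (hvw : ∀ a b c d : ℝ, 0 ≤ a → a ≤ b → b ≤ T → 0 ≤ c → c ≤ d → d ≤ T →
      pVar2d ρ' R a b c d ^ ρ' ≤ ENNReal.ofReal (w a b c d))
    (n m₁ m₂ : ℕ) (hn : 0 < n) (hm : m₁ < m₂) (hm2 : m₂ ≤ n) :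
    (∑ k ∈ Finset.Ico m₁ m₂, ∑ l ∈ Finset.Ico m₁ m₂,
        pVar2d ρ' R (k * T / n) ((k + 1 : ℕ) * T / n)
          (l * T / n) ((l + 1 : ℕ) * T / n) ^ ρ')
      ≤ ENNReal.ofReal (w (m₁ * T / n) (m₂ * T / n) (m₁ * T / n) (m₂ * T / n)) := by
  classical
  set g : ℕ → ℝ := fun k => (k : ℝ) * T / n with hgdef
  have hgmono : Monotone g := by
    intro i j hij
    simp only [hgdef]
    have hn0 : (0 : ℝ) < (n : ℝ) := by exact_mod_cast hn
    have h1 : (i : ℝ) * T ≤ (j : ℝ) * T :=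
      mul_le_mul_of_nonneg_right (Nat.cast_le.mpr hij) hT.le
    exact div_le_div_of_nonneg_right h1 hn0.le
  have hg0 : ∀ k, 0 ≤ g k := by
    intro k
    simp only [hgdef]
    positivity
  have hgT : ∀ k, k ≤ n → g k ≤ T := by
    intro k hk
    simp only [hgdef]
    rw [div_le_iff₀ (by exact_mod_cast hn)]
    calc (k : ℝ) * T ≤ (n : ℝ) * T :=
          mul_le_mul_of_nonneg_right (Nat.cast_le.mpr hk) hT.le
    _ = T * n := by ring
  set f : ℕ × ℕ → ℝ≥0∞ := fun p =>
    pVar2d ρ' R (g p.1) (g (p.1 + 1)) (g p.2) (g (p.2 + 1)) with hfdef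
  have hgoal : (∑ k ∈ Finset.Ico m₁ m₂, ∑ l ∈ Finset.Ico m₁ m₂,
      pVar2d ρ' R (k * T / n) ((k + 1 : ℕ) * T / n)
        (l * T / n) ((l + 1 : ℕ) * T / n) ^ ρ')
      = ∑ p ∈ Finset.Ico m₁ m₂ ×ˢ Finset.Ico m₁ m₂, f p ^ ρ' := by
    rw [Finset.sum_product]
  rw [hgoal]
  set S : Finset (ℕ × ℕ) :=
    (Finset.Ico m₁ m₂ ×ˢ Finset.Ico m₁ m₂).filter (fun p => f p ≠ 0) with hSdef
  have hsum_eq : (∑ p ∈ Finset.Ico m₁ m₂ ×ˢ Finset.Ico m₁ m₂, f p ^ ρ')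
      = ∑ p ∈ S, f p ^ ρ' := by
    refine (Finset.sum_subset (Finset.filter_subset _ _) ?_).symm
    intro p hp hpn
    have : f p = 0 := by
      by_contra hne
      exact hpn (Finset.mem_filter.mpr ⟨hp, hne⟩)
    rw [this, ENNReal.zero_rpow_of_pos hρ'0]
  rw [hsum_eq]
  rcases Finset.eq_empty_or_nonempty S with hS | hSne
  · rw [hS]
    simp
  -- nonempty case
  have hSsub : ∀ p ∈ S, p ∈ Finset.Ico m₁ m₂ ×ˢ Finset.Ico m₁ m₂ :=
    fun p hp => (Finset.mem_filter.mp hp).1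
  have hpbnd : ∀ p ∈ S, m₁ ≤ p.1 ∧ p.1 < m₂ ∧ m₁ ≤ p.2 ∧ p.2 < m₂ := by
    intro p hp
    have h := Finset.mem_product.mp (hSsub p hp)
    rw [Finset.mem_Ico, Finset.mem_Ico] at h
    exact ⟨h.1.1, h.1.2, h.2.1, h.2.2⟩
  set K : Finset ℕ := S.image Prod.fst with hKdef
  have hKne : K.Nonempty := hSne.image _
  have hK : K ⊆ Finset.Ico m₁ m₂ := by
    intro k hk
    obtain ⟨p, hp, rfl⟩ := Finset.mem_image.mp hk
    exact (Finset.mem_product.mp (hSsub p hp)).1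
  set L : ℕ → Finset ℕ := fun k => (S.filter fun p => p.1 = k).image Prod.snd
    with hLdef
  have hLsub : ∀ k, L k ⊆ Finset.Ico m₁ m₂ := by
    intro k l hl
    simp only [hLdef] at hl
    obtain ⟨p, hp, rfl⟩ := Finset.mem_image.mp hl
    exact (Finset.mem_product.mp (hSsub p (Finset.mem_filter.mp hp).1)).2
  have hmemL : ∀ k l, l ∈ L k → (k, l) ∈ S := by
    intro k l hl
    simp only [hLdef] at hl
    obtain ⟨p, hp, rfl⟩ := Finset.mem_image.mp hl
    obtain ⟨hpS, hp1⟩ := Finset.mem_filter.mp hp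
    have hpe : p = (k, p.2) := Prod.ext hp1 rfl
    rwa [← hpe]
  have hp1K : ∀ p ∈ S, p.1 ∈ K := fun p hp => Finset.mem_image_of_mem _ hp
  have hp2L : ∀ p ∈ S, p.2 ∈ L p.1 := by
    intro p hp
    simp only [hLdef]
    exact Finset.mem_image_of_mem _ (Finset.mem_filter.mpr ⟨hp, rfl⟩)
  set blk : ℕ × ℕ → ℝ × ℝ × ℝ × ℝ := fun p =>
    (g (strt K m₁ p.1), g (nxt K m₂ p.1),
      g (strt (L p.1) m₁ p.2), g (nxt (L p.1) m₂ p.2)) with hblkdef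
  -- per-term bound
  have hterm : ∀ p ∈ S, f p ^ ρ'
      ≤ ENNReal.ofReal (w (blk p).1 (blk p).2.1 (blk p).2.2.1 (blk p).2.2.2) := by
    intro p hp
    obtain ⟨h1, h2, h3, h4⟩ := hpbnd p hp
    have hx1 : strt K m₁ p.1 ≤ p.1 := strt_le h1
    have hx2 : p.1 + 1 ≤ nxt K m₂ p.1 := lt_nxt hK (hp1K p hp)
    have hy1 : strt (L p.1) m₁ p.2 ≤ p.2 := strt_le h3
    have hy2 : p.2 + 1 ≤ nxt (L p.1) m₂ p.2 := lt_nxt (hLsub p.1) (hp2L p hp)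
    have hmono := pVar2d_mono hρ'0 R (hgmono hx1) (hgmono hx2)
      (hgmono hy1) (hgmono hy2)
    have hrp : f p ^ ρ' ≤ (pVar2d ρ' R (g (strt K m₁ p.1)) (g (nxt K m₂ p.1))
        (g (strt (L p.1) m₁ p.2)) (g (nxt (L p.1) m₂ p.2))) ^ ρ' :=
      ENNReal.rpow_le_rpow hmono hρ'0.le
    refine hrp.trans ?_
    simp only [hblkdef]
    refine hvw _ _ _ _ (hg0 _) (hgmono (le_trans hx1 (le_of_lt (lt_nxt hK (hp1K p hp)))))
      (hgT _ (le_trans (nxt_le_M K m₂ p.1) hm2)) (hg0 _)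
      (hgmono (le_trans hy1 (le_of_lt (lt_nxt (hLsub p.1) (hp2L p hp)))))
      (hgT _ (le_trans (nxt_le_M (L p.1) m₂ p.2) hm2))
  have hwpos : ∀ p ∈ S, 0 ≤ w (blk p).1 (blk p).2.1 (blk p).2.2.1 (blk p).2.2.2 := by
    intro p hp
    have hfne : f p ≠ 0 := (Finset.mem_filter.mp hp).2
    have hne0 : f p ^ ρ' ≠ 0 := by
      intro h
      rcases ENNReal.rpow_eq_zero_iff.mp h with ⟨h0, _⟩ | ⟨_, hneg⟩
      · exact hfne h0
      · linarith
    by_contra hneg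
    push_neg at hneg
    have hle := hterm p hp
    rw [ENNReal.ofReal_eq_zero.mpr hneg.le] at hle
    exact hne0 (le_antisymm hle zero_le)
  -- the partition
  set e := S.equivFin with hedef
  set r : ℕ → ℝ × ℝ × ℝ × ℝ := fun i =>
    if h : i < S.card then blk ↑(e.symm ⟨i, h⟩) else (g m₁, g m₁, g m₁, g m₁)
    with hrdef
  have hprop1 : ∀ i < S.card, (r i).1 ≤ (r i).2.1 ∧ (r i).2.2.1 ≤ (r i).2.2.2 := by
    intro i hi
    simp only [hrdef, dif_pos hi]
    set p := (↑(e.symm ⟨i, hi⟩) : ℕ × ℕ) with hpdef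
    have hpS : p ∈ S := (e.symm ⟨i, hi⟩).prop
    obtain ⟨h1, h2, h3, h4⟩ := hpbnd p hpS
    constructor
    · exact hgmono (le_trans (strt_le h1) (le_of_lt (lt_nxt hK (hp1K p hpS))))
    · exact hgmono (le_trans (strt_le h3) (le_of_lt (lt_nxt (hLsub p.1) (hp2L p hpS))))
  have hunion : (⋃ i ∈ Finset.range S.card,
      Set.Icc (r i).1 (r i).2.1 ×ˢ Set.Icc (r i).2.2.1 (r i).2.2.2)
      = Set.Icc (g m₁) (g m₂) ×ˢ Set.Icc (g m₁) (g m₂) := by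
    apply Set.eq_of_subset_of_subset
    · refine Set.iUnion₂_subset fun i hi => ?_
      rw [Finset.mem_range] at hi
      simp only [hrdef, dif_pos hi]
      set p := (↑(e.symm ⟨i, hi⟩) : ℕ × ℕ) with hpdef
      have hpS : p ∈ S := (e.symm ⟨i, hi⟩).prop
      obtain ⟨h1, h2, h3, h4⟩ := hpbnd p hpS
      refine Set.prod_mono (Set.Icc_subset_Icc ?_ ?_) (Set.Icc_subset_Icc ?_ ?_)
      · exact hgmono (m_le_strt h1)
      · exact hgmono (nxt_le_M K m₂ p.1)
      · exact hgmono (m_le_strt h3)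
      · exact hgmono (nxt_le_M (L p.1) m₂ p.2)
    · rintro ⟨u, v⟩ huv
      rw [Set.mem_prod] at huv
      obtain ⟨hu, hv⟩ := huv
      obtain ⟨k, hkK, hk1, hk2⟩ := cover1d hgmono hK hKne hu.1 hu.2
      have hLk : (L k).Nonempty := by
        obtain ⟨p, hp, hpk⟩ := Finset.mem_image.mp hkK
        refine ⟨p.2, ?_⟩
        rw [← hpk]
        exact hp2L p hp
      obtain ⟨l, hlL, hl1, hl2⟩ := cover1d hgmono (hLsub k) hLk hv.1 hv.2
      have hklS : (k, l) ∈ S := hmemL k l hlL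
      set i : Fin S.card := e ⟨(k, l), hklS⟩ with hidef
      rw [Set.mem_iUnion₂]
      refine ⟨i.val, Finset.mem_range.mpr i.isLt, ?_⟩
      have hr : r i.val = blk (k, l) := by
        simp only [hrdef, dif_pos i.isLt]
        have h5 : (⟨i.val, i.isLt⟩ : Fin S.card) = i := rfl
        rw [h5, hidef, Equiv.symm_apply_apply]
      rw [hr]
      exact Set.mem_prod.mpr ⟨⟨hk1, hk2⟩, ⟨hl1, hl2⟩⟩
  have hdisj : ∀ i < S.card, ∀ j < S.card, i ≠ j →
      Disjoint (Set.Ioo (r i).1 (r i).2.1 ×ˢ Set.Ioo (r i).2.2.1 (r i).2.2.2)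
        (Set.Ioo (r j).1 (r j).2.1 ×ˢ Set.Ioo (r j).2.2.1 (r j).2.2.2) := by
    intro i hi j hj hij
    simp only [hrdef, dif_pos hi, dif_pos hj]
    set p := (↑(e.symm ⟨i, hi⟩) : ℕ × ℕ) with hpdef
    set q := (↑(e.symm ⟨j, hj⟩) : ℕ × ℕ) with hqdef
    have hpS : p ∈ S := (e.symm ⟨i, hi⟩).prop
    have hqS : q ∈ S := (e.symm ⟨j, hj⟩).prop
    have hpq : p ≠ q := by
      intro h
      apply hij
      have h2 : e.symm ⟨i, hi⟩ = e.symm ⟨j, hj⟩ := Subtype.ext h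
      have h3 : (⟨i, hi⟩ : Fin S.card) = ⟨j, hj⟩ := by
        rw [← Equiv.apply_symm_apply e ⟨i, hi⟩, ← Equiv.apply_symm_apply e ⟨j, hj⟩, h2]
      simpa using h3
    by_cases h1 : p.1 = q.1
    · have h2 : p.2 ≠ q.2 := fun h => hpq (Prod.ext h1 h)
      show Disjoint
        (Set.Ioo (g (strt K m₁ p.1)) (g (nxt K m₂ p.1)) ×ˢ
          Set.Ioo (g (strt (L p.1) m₁ p.2)) (g (nxt (L p.1) m₂ p.2)))
        (Set.Ioo (g (strt K m₁ q.1)) (g (nxt K m₂ q.1)) ×ˢ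
          Set.Ioo (g (strt (L q.1) m₁ q.2)) (g (nxt (L q.1) m₂ q.2)))
      rw [← h1]
      have hq2 : q.2 ∈ L p.1 := by
        rw [h1]
        exact hp2L q hqS
      exact Disjoint.set_prod_right (disj1d hgmono (hp2L p hpS) hq2 h2) _ _
    · show Disjoint
        (Set.Ioo (g (strt K m₁ p.1)) (g (nxt K m₂ p.1)) ×ˢ
          Set.Ioo (g (strt (L p.1) m₁ p.2)) (g (nxt (L p.1) m₂ p.2)))
        (Set.Ioo (g (strt K m₁ q.1)) (g (nxt K m₂ q.1)) ×ˢ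
          Set.Ioo (g (strt (L q.1) m₁ q.2)) (g (nxt (L q.1) m₂ q.2)))
      exact Disjoint.set_prod_left (disj1d hgmono (hp1K p hpS) (hp1K q hqS) h1) _ _
  have hpart : IsRectPartition (g m₁) (g m₂) (g m₁) (g m₂) S.card r :=
    ⟨hprop1, hunion, hdisj⟩
  have hsup' := hsup (g m₁) (g m₂) (g m₁) (g m₂) (hg0 m₁) (hgmono hm.le)
    (hgT m₂ hm2) (hg0 m₁) (hgmono hm.le) (hgT m₂ hm2) S.card r hpart
  have hsum_r : (∑ i ∈ Finset.range S.card,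
      w (r i).1 (r i).2.1 (r i).2.2.1 (r i).2.2.2)
      = ∑ p ∈ S, w (blk p).1 (blk p).2.1 (blk p).2.2.1 (blk p).2.2.2 := by
    rw [← Fin.sum_univ_eq_sum_range]
    rw [show (fun i : Fin S.card => w (r i.val).1 (r i.val).2.1 (r i.val).2.2.1 (r i.val).2.2.2)
        = fun i : Fin S.card => (fun q : ↥S =>
            w (blk ↑q).1 (blk ↑q).2.1 (blk ↑q).2.2.1 (blk ↑q).2.2.2) (e.symm i) from ?_]
    · rw [Equiv.sum_comp e.symm (fun q : ↥S =>
        w (blk ↑q).1 (blk ↑q).2.1 (blk ↑q).2.2.1 (blk ↑q).2.2.2)]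
      exact Finset.sum_coe_sort S (fun p => w (blk p).1 (blk p).2.1 (blk p).2.2.1 (blk p).2.2.2)
    · funext i
      simp only [hrdef, dif_pos i.isLt]
  rw [hsum_r] at hsup'
  calc (∑ p ∈ S, f p ^ ρ')
      ≤ ∑ p ∈ S, ENNReal.ofReal (w (blk p).1 (blk p).2.1 (blk p).2.2.1 (blk p).2.2.2) :=
        Finset.sum_le_sum hterm
    _ = ENNReal.ofReal (∑ p ∈ S, w (blk p).1 (blk p).2.1 (blk p).2.2.1 (blk p).2.2.2) :=
        (ENNReal.ofReal_sum_of_nonneg hwpos).symm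
    _ ≤ ENNReal.ofReal (w (g m₁) (g m₂) (g m₁) (g m₂)) :=
        ENNReal.ofReal_le_ofReal hsup'

/-- Superadditivity estimates for the 2d `ρ'`-variation of the covariance `R` of a
centered Gaussian process over uniform grid cells, and the resulting
`(T/n)^{2/ρ'−1}(t−s)` bound on the sum of squared cell variations. -/
theorem grid_variation_sum_bound
    (T C ρ ρ' : ℝ) (hρ : 1 ≤ ρ) (hρ2 : ρ < 2) (hρ' : ρ < ρ') (hρ'2 : ρ' < 2)
    (hT : 0 < T) (hC : 0 < C) :
    ∃ C' : ℝ, 0 < C' ∧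
      ∀ (Ω : Type) [MeasurableSpace Ω] (P : Measure Ω), IsProbabilityMeasure P →
      ∀ (x : ℝ → Ω → ℝ) (R : ℝ → ℝ → ℝ) (w : ℝ → ℝ → ℝ → ℝ → ℝ),
        IsCenteredGaussianProcess P x T →
        (∀ s t : ℝ, R s t = ∫ ω, x s ω * x t ω ∂P) →
        (∀ a b c d : ℝ, 0 ≤ a → a ≤ b → b ≤ T → 0 ≤ c → c ≤ d → d ≤ T →
          ∀ (k : ℕ) (r : ℕ → ℝ × ℝ × ℝ × ℝ), IsRectPartition a b c d k r →
            ∑ i ∈ Finset.range k, w (r i).1 (r i).2.1 (r i).2.2.1 (r i).2.2.2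
              ≤ w a b c d) →
        (∀ a b c d : ℝ, 0 ≤ a → a ≤ b → b ≤ T → 0 ≤ c → c ≤ d → d ≤ T →
          pVar2d ρ' R a b c d ^ ρ' ≤ ENNReal.ofReal (w a b c d)) →
        (∀ s t : ℝ, 0 ≤ s → s ≤ t → t ≤ T → w s t s t ≤ C * (t - s)) →
        (∀ a b c d : ℝ, 0 ≤ a → a ≤ b → b ≤ T → 0 ≤ c → c ≤ d → d ≤ T →
          pVar2d ρ' R a b c d ^ (2 * ρ') ≤ ENNReal.ofReal (C * (b - a) * (d - c))) →
        ∀ n m₁ m₂ : ℕ, 0 < n → m₁ < m₂ → m₂ ≤ n →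
          (∑ k ∈ Finset.Ico m₁ m₂, ∑ l ∈ Finset.Ico m₁ m₂,
              pVar2d ρ' R (k * T / n) ((k + 1 : ℕ) * T / n)
                (l * T / n) ((l + 1 : ℕ) * T / n) ^ ρ')
            ≤ ENNReal.ofReal (w (m₁ * T / n) (m₂ * T / n) (m₁ * T / n) (m₂ * T / n)) ∧
          (∑ k ∈ Finset.Ico m₁ m₂, ∑ l ∈ Finset.Ico m₁ m₂,
              pVar2d ρ' R (k * T / n) ((k + 1 : ℕ) * T / n)
                (l * T / n) ((l + 1 : ℕ) * T / n) ^ ρ')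
            ≤ ENNReal.ofReal (C * (m₂ * T / n - m₁ * T / n)) ∧
          (∑ k ∈ Finset.Ico m₁ m₂, ∑ l ∈ Finset.Ico m₁ m₂,
              pVar2d ρ' R (k * T / n) ((k + 1 : ℕ) * T / n)
                (l * T / n) ((l + 1 : ℕ) * T / n) ^ (2 : ℝ))
            ≤ ENNReal.ofReal
                (C' * (T / n) ^ (2 / ρ' - 1) * (m₂ * T / n - m₁ * T / n)) := by
  refine ⟨C ^ ((2 - ρ') / (2 * ρ')) * C, by positivity, ?_⟩
  intro Ω _ P _ x R w hgauss hR hsup hvw hwC hC2 n m₁ m₂ hn hm hm2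
  have hρ'0 : 0 < ρ' := by linarith
  have hn0 : (0:ℝ) < (n:ℝ) := by exact_mod_cast hn
  have hq0 : (0:ℝ) < T / n := div_pos hT hn0
  have hg0 : ∀ k : ℕ, (0:ℝ) ≤ (k:ℝ) * T / n := fun k => by positivity
  have hgmono : ∀ {i j : ℕ}, i ≤ j → (i:ℝ) * T / n ≤ (j:ℝ) * T / n := by
    intro i j hij
    exact div_le_div_of_nonneg_right
      (mul_le_mul_of_nonneg_right (Nat.cast_le.mpr hij) hT.le) hn0.le
  have hgT : ∀ k : ℕ, k ≤ n → (k:ℝ) * T / n ≤ T := by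
    intro k hk
    rw [div_le_iff₀ hn0]
    calc (k : ℝ) * T ≤ (n : ℝ) * T :=
          mul_le_mul_of_nonneg_right (Nat.cast_le.mpr hk) hT.le
    _ = T * n := by ring
  have goal1 := key_sum_le T ρ' hρ'0 hT R w hsup hvw n m₁ m₂ hn hm hm2
  have goal2 : (∑ k ∈ Finset.Ico m₁ m₂, ∑ l ∈ Finset.Ico m₁ m₂,
      pVar2d ρ' R (k * T / n) ((k + 1 : ℕ) * T / n)
        (l * T / n) ((l + 1 : ℕ) * T / n) ^ ρ')
      ≤ ENNReal.ofReal (C * (m₂ * T / n - m₁ * T / n)) :=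
    goal1.trans (ENNReal.ofReal_le_ofReal
      (hwC _ _ (hg0 m₁) (hgmono hm.le) (hgT m₂ hm2)))
  refine ⟨goal1, goal2, ?_⟩
  set D : ℝ≥0∞ := ENNReal.ofReal (C * (T/n) * (T/n)) with hDdef
  set ee : ℝ := (2 - ρ') / (2 * ρ') with heedef
  have hee0 : 0 ≤ ee := by
    apply div_nonneg <;> linarith
  have hstep : ∀ k : ℕ, ((k+1:ℕ):ℝ) * T / n - (k:ℝ) * T / n = T / n := by
    intro k
    push_cast
    field_simp
    ring
  have hcell : ∀ k l : ℕ, k < m₂ → l < m₂ →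
      pVar2d ρ' R (k * T / n) ((k + 1 : ℕ) * T / n)
        (l * T / n) ((l + 1 : ℕ) * T / n) ^ (2 * ρ') ≤ D := by
    intro k l hk hl
    have h := hC2 ((k:ℝ) * T / n) (((k+1:ℕ):ℝ) * T / n) ((l:ℝ) * T / n)
      (((l+1:ℕ):ℝ) * T / n) (hg0 k) (hgmono (Nat.le_succ k))
      (hgT (k+1) (by omega)) (hg0 l) (hgmono (Nat.le_succ l))
      (hgT (l+1) (by omega))
    rw [hstep k, hstep l] at h
    exact h
  have hterm3 : ∀ k l : ℕ, k < m₂ → l < m₂ →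
      pVar2d ρ' R (k * T / n) ((k + 1 : ℕ) * T / n)
        (l * T / n) ((l + 1 : ℕ) * T / n) ^ (2:ℝ)
      ≤ D ^ ee * pVar2d ρ' R (k * T / n) ((k + 1 : ℕ) * T / n)
        (l * T / n) ((l + 1 : ℕ) * T / n) ^ ρ' := by
    intro k l hk hl
    set X := pVar2d ρ' R (k * T / n) ((k + 1 : ℕ) * T / n)
      (l * T / n) ((l + 1 : ℕ) * T / n) with hXdef
    have hcb := hcell k l hk hl
    rw [← hXdef] at hcb
    have hXtop : X ≠ ⊤ := by
      intro htop
      rw [htop, ENNReal.top_rpow_of_pos (by linarith)] at hcb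
      exact ENNReal.ofReal_ne_top (top_le_iff.mp hcb)
    by_cases hX0 : X = 0
    · rw [hX0, ENNReal.zero_rpow_of_pos (by norm_num : (0:ℝ) < 2)]
      exact zero_le
    · have e1 : X ^ (2 - ρ') * X ^ ρ' = X ^ (2:ℝ) := by
        rw [← ENNReal.rpow_add _ _ hX0 hXtop]
        congr 1
        ring
      have e2 : X ^ (2 - ρ') = (X ^ (2 * ρ')) ^ ee := by
        rw [← ENNReal.rpow_mul]
        congr 1
        rw [heedef]
        field_simp
      calc X ^ (2:ℝ) = (X ^ (2 * ρ')) ^ ee * X ^ ρ' := by rw [← e1, e2]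
      _ ≤ D ^ ee * X ^ ρ' :=
          mul_le_mul_left (ENNReal.rpow_le_rpow hcb hee0) _
  calc (∑ k ∈ Finset.Ico m₁ m₂, ∑ l ∈ Finset.Ico m₁ m₂,
      pVar2d ρ' R (k * T / n) ((k + 1 : ℕ) * T / n)
        (l * T / n) ((l + 1 : ℕ) * T / n) ^ (2:ℝ))
      ≤ ∑ k ∈ Finset.Ico m₁ m₂, ∑ l ∈ Finset.Ico m₁ m₂,
        D ^ ee * pVar2d ρ' R (k * T / n) ((k + 1 : ℕ) * T / n)
          (l * T / n) ((l + 1 : ℕ) * T / n) ^ ρ' := by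
        refine Finset.sum_le_sum fun k hk => Finset.sum_le_sum fun l hl => ?_
        exact hterm3 k l (Finset.mem_Ico.mp hk).2 (Finset.mem_Ico.mp hl).2
  _ = D ^ ee * ∑ k ∈ Finset.Ico m₁ m₂, ∑ l ∈ Finset.Ico m₁ m₂,
        pVar2d ρ' R (k * T / n) ((k + 1 : ℕ) * T / n)
          (l * T / n) ((l + 1 : ℕ) * T / n) ^ ρ' := by
        simp only [← Finset.mul_sum]
  _ ≤ D ^ ee * ENNReal.ofReal (C * (m₂ * T / n - m₁ * T / n)) :=
        mul_le_mul_right goal2 _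
  _ ≤ ENNReal.ofReal (C ^ ((2 - ρ') / (2 * ρ')) * C * (T / n) ^ (2 / ρ' - 1)
        * (m₂ * T / n - m₁ * T / n)) := by
        rw [hDdef, ENNReal.ofReal_rpow_of_pos (by positivity),
          ← ENNReal.ofReal_mul (by positivity)]
        apply ENNReal.ofReal_le_ofReal
        apply le_of_eq
        have hexp : ee + ee = 2/ρ' - 1 := by
          rw [heedef]
          field_simp
          try ring
        have hq : (C * (T/n) * (T/n)) ^ ee = C ^ ee * (T/n) ^ (2/ρ' - 1) := by
          rw [Real.mul_rpow (by positivity) hq0.le, Real.mul_rpow hC.le hq0.le,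
            mul_assoc, ← Real.rpow_add hq0, hexp]
        rw [hq, heedef]
        ring
end
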